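/- arXiv:1809.08533 — 6 statements merged into one kernel-verified Lean document; each statement's English description precedes it below -/
import Mathlib

section
/- For every integer n ≥ 0 and every ω ∈ [0, 2π), the density φ_{1,n}(ω′) = cos(nω′)/Ξ(ω′) satisfies K*[φ_{1,n}](ω) = (1/(2 e^{2nρ₀})) · cos(nω)/Ξ(ω); explicitly, (1/2π) ∫₀^{2π} (⟨x(ω) − x(ω′), ν(ω)⟩ / |x(ω) − x(ω′)|²) · cos(nω′) dω′ = cos(nω) / (2 e^{2nρ₀} Ξ(ω)). That is, φ_{1,n} is an eigenfunction of the Neumann–Poincaré operator of the ellipse with eigenvalue aₙ = 1/(2 e^{2nρ₀}). -/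
open Real MeasureTheory intervalIntegral

namespace NPaux

lemma q_inv_gt {q : ℝ} (hq0 : 0 < q) (hq1 : q < 1) : 1 < q⁻¹ := by
  rw [← one_div, lt_div_iff₀ hq0]; linarith

lemma s_pos {q : ℝ} (hq0 : 0 < q) (hq1 : q < 1) : 0 < (q⁻¹ - q) / 2 := by
  have := q_inv_gt hq0 hq1; linarith

lemma den_pos {q : ℝ} (hq0 : 0 < q) (hq1 : q < 1) (θ : ℝ) :
    0 < (q + q⁻¹) / 2 - Real.cos θ := by
  have h1 : Real.cos θ ≤ 1 := Real.cos_le_one θ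
  have h2 : q * q⁻¹ = 1 := mul_inv_cancel₀ hq0.ne'
  nlinarith [mul_nonneg (sq_nonneg (1 - q)) (inv_pos.2 hq0).le, sq_nonneg (1 - q)]

lemma cont_den {q : ℝ} (hq0 : 0 < q) (hq1 : q < 1) :
    Continuous fun θ : ℝ => ((q + q⁻¹) / 2 - Real.cos θ)⁻¹ :=
  (continuous_const.sub Real.continuous_cos).inv₀ fun θ => (den_pos hq0 hq1 θ).ne'

lemma integrable_cos_div {q : ℝ} (hq0 : 0 < q) (hq1 : q < 1) (r a b : ℝ) :
    IntervalIntegrable (fun θ => Real.cos (r * θ) / ((q + q⁻¹) / 2 - Real.cos θ))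
      volume a b := by
  apply Continuous.intervalIntegrable
  exact (Real.continuous_cos.comp (continuous_const.mul continuous_id)).div
    (continuous_const.sub Real.continuous_cos) fun θ => (den_pos hq0 hq1 θ).ne'

lemma integrable_sin_div {q : ℝ} (hq0 : 0 < q) (hq1 : q < 1) (r a b : ℝ) :
    IntervalIntegrable (fun θ => Real.sin (r * θ) / ((q + q⁻¹) / 2 - Real.cos θ))
      volume a b := by
  apply Continuous.intervalIntegrable
  exact (Real.continuous_sin.comp (continuous_const.mul continuous_id)).div
    (continuous_const.sub Real.continuous_cos) fun θ => (den_pos hq0 hq1 θ).ne'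

/-- the base Poisson integral `I₀`. -/
lemma poisson_I0 {q : ℝ} (hq0 : 0 < q) (hq1 : q < 1) :
    ∫ θ in (0:ℝ)..(2 * π), ((q + q⁻¹) / 2 - Real.cos θ)⁻¹
      = 2 * π / ((q⁻¹ - q) / 2) := by
  have hs := s_pos hq0 hq1
  have hderiv : ∀ θ ∈ Set.uIcc (0:ℝ) (2 * π),
      HasDerivAt (fun θ => (θ + 2 * Real.arctan (q * Real.sin θ / (1 - q * Real.cos θ)))
          / ((q⁻¹ - q) / 2))
        (((q + q⁻¹) / 2 - Real.cos θ)⁻¹) θ := by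
    intro θ _
    have hA : 0 < 1 - q * Real.cos θ := by
      nlinarith [Real.cos_le_one θ, Real.neg_one_le_cos θ]
    have hnum : HasDerivAt (fun θ => q * Real.sin θ) (q * Real.cos θ) θ :=
      (Real.hasDerivAt_sin θ).const_mul q
    have hden' : HasDerivAt (fun θ => 1 - q * Real.cos θ) (q * Real.sin θ) θ := by
      have := ((Real.hasDerivAt_cos θ).const_mul q).const_sub 1
      rw [show q * Real.sin θ = -(q * -Real.sin θ) by ring]; exact this
    have hu := hnum.div hden' hA.ne'
    have harc := hu.arctan
    have hF := ((hasDerivAt_id θ).add (harc.const_mul 2)).div_const ((q⁻¹ - q) / 2)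
    refine hF.congr_deriv ?_
    symm
    have hpy := Real.sin_sq_add_cos_sq θ
    have h1u : 0 < 1 + (q * Real.sin θ / (1 - q * Real.cos θ)) ^ 2 := by positivity
    have hden2 := (den_pos hq0 hq1 θ).ne'
    have hApos : (0:ℝ) < (1 - q * Real.cos θ) ^ 2 + (q * Real.sin θ) ^ 2 := by
      nlinarith [sq_nonneg (q * Real.sin θ), pow_pos hA 2]
    have hDpos : (0:ℝ) < q * q + 1 - q * 2 * Real.cos θ := by
      nlinarith [Real.cos_le_one θ, Real.neg_one_le_cos θ, sq_nonneg (1 - q)]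
    have hDen : (((1 - q * Real.cos θ) ^ 2 + (q * Real.sin θ) ^ 2) * (1 - q * Real.cos θ) ^ 2
        * (1 - q * q)) ≠ 0 := by
      have h2 : (0:ℝ) < 1 - q * q := by nlinarith
      positivity
    field_simp
    have hN : (1 + ((fun θ => q * Real.sin θ) / fun θ => 1 - q * Real.cos θ) θ ^ 2)
        * (1 - q * Real.cos θ) ^ 2 = q ^ 2 + 1 - q * 2 * Real.cos θ := by
      simp only [Pi.div_apply]
      rw [add_mul, one_mul, div_pow, div_mul_cancel₀ _ (pow_ne_zero 2 hA.ne')]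
      linear_combination q ^ 2 * hpy
    rw [hN, div_self (ne_of_gt (by nlinarith)), eq_div_iff (ne_of_gt (by nlinarith))]
    linear_combination (2 * q ^ 2) * hpy
  rw [intervalIntegral.integral_eq_sub_of_hasDerivAt hderiv
    ((cont_den hq0 hq1).intervalIntegrable _ _)]
  simp [Real.sin_two_pi, Real.cos_two_pi]

/-- `∫ cos (k θ) = 0` over a period, for `k ≥ 1`. -/
lemma integral_cos_nat (k : ℕ) (hk : k ≠ 0) :
    ∫ θ in (0:ℝ)..(2 * π), Real.cos ((k : ℝ) * θ) = 0 := by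
  have hk' : (k : ℝ) ≠ 0 := Nat.cast_ne_zero.2 hk
  have hderiv : ∀ θ ∈ Set.uIcc (0:ℝ) (2 * π),
      HasDerivAt (fun θ => Real.sin ((k : ℝ) * θ) / (k : ℝ))
        (Real.cos ((k : ℝ) * θ)) θ := by
    intro θ _
    have h1 : HasDerivAt (fun θ : ℝ => (k : ℝ) * θ) (k : ℝ) θ := by
      simpa using (hasDerivAt_id θ).const_mul (k : ℝ)
    have := ((Real.hasDerivAt_sin ((k : ℝ) * θ)).comp θ h1).div_const (k : ℝ)
    refine this.congr_deriv ?_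
    field_simp
  rw [intervalIntegral.integral_eq_sub_of_hasDerivAt hderiv
    ((Real.continuous_cos.comp (continuous_const.mul continuous_id)).intervalIntegrable _ _)]
  have h2 : (k : ℝ) * (2 * π) = ((2 * k : ℕ) : ℝ) * π := by push_cast; ring
  rw [h2, Real.sin_nat_mul_pi]
  simp

/-- the Poisson cosine integrals. -/
lemma poisson_In {q : ℝ} (hq0 : 0 < q) (hq1 : q < 1) :
    ∀ n : ℕ, ∫ θ in (0:ℝ)..(2 * π),
        Real.cos ((n : ℝ) * θ) / ((q + q⁻¹) / 2 - Real.cos θ)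
      = 2 * π * q ^ n / ((q⁻¹ - q) / 2) := by
  have hs := s_pos hq0 hq1
  have hqq := mul_inv_cancel₀ hq0.ne'
  have hq0' : q ≠ 0 := hq0.ne'
  have hs' : q⁻¹ - q ≠ 0 := by intro hc; rw [hc] at hs; norm_num at hs
  have h1q : (1:ℝ) - q ^ 2 ≠ 0 := by nlinarith
  have hqa : q - q ^ 3 ≠ 0 := by
    intro hc; exact (mul_ne_zero hq0' h1q) (by linear_combination hc)
  have hqb : q * 2 - q ^ 3 * 2 ≠ 0 := by
    intro hc; exact hqa (by linarith)
  have key : ∀ n : ℕ,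
      (∫ θ in (0:ℝ)..(2 * π), Real.cos ((n : ℝ) * θ) / ((q + q⁻¹) / 2 - Real.cos θ)
        = 2 * π * q ^ n / ((q⁻¹ - q) / 2)) ∧
      (∫ θ in (0:ℝ)..(2 * π), Real.cos (((n + 1 : ℕ) : ℝ) * θ) / ((q + q⁻¹) / 2 - Real.cos θ)
        = 2 * π * q ^ (n + 1) / ((q⁻¹ - q) / 2)) := by
    intro n
    induction n with
    | zero =>
      constructor
      · have hpt : ∀ θ : ℝ, Real.cos (((0 : ℕ) : ℝ) * θ) / ((q + q⁻¹) / 2 - Real.cos θ)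
            = ((q + q⁻¹) / 2 - Real.cos θ)⁻¹ := by
          intro θ; norm_num
        rw [intervalIntegral.integral_congr (fun θ _ => hpt θ), poisson_I0 hq0 hq1]
        simp
      · have hpt : ∀ θ : ℝ, Real.cos (((0 + 1 : ℕ) : ℝ) * θ) / ((q + q⁻¹) / 2 - Real.cos θ)
            = ((q + q⁻¹) / 2) * ((q + q⁻¹) / 2 - Real.cos θ)⁻¹ - 1 := by
          intro θ
          have h := (den_pos hq0 hq1 θ).ne'
          have h1 : ((0 + 1 : ℕ) : ℝ) * θ = θ := by norm_num
          rw [h1, show Real.cos θ = (q + q⁻¹) / 2 - ((q + q⁻¹) / 2 - Real.cos θ) from by ring]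
          generalize hX : (q + q⁻¹) / 2 - Real.cos θ = X at h ⊢
          field_simp
          ring
        rw [intervalIntegral.integral_congr (fun θ _ => hpt θ)]
        rw [intervalIntegral.integral_sub
          (((cont_den hq0 hq1).intervalIntegrable _ _).const_mul _)
          intervalIntegrable_const]
        rw [intervalIntegral.integral_const_mul, poisson_I0 hq0 hq1]
        simp only [intervalIntegral.integral_const, smul_eq_mul, mul_one, sub_zero]
        rw [pow_one]
        generalize hQ : q⁻¹ = Q at hqq hs' ⊢
        field_simp
        ring
    | succ n ih =>
      refine ⟨ih.2, ?_⟩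
      have hpt : ∀ θ : ℝ, Real.cos (((n + 1 + 1 : ℕ) : ℝ) * θ) / ((q + q⁻¹) / 2 - Real.cos θ)
          = (q + q⁻¹) * (Real.cos (((n + 1 : ℕ) : ℝ) * θ) / ((q + q⁻¹) / 2 - Real.cos θ))
            - Real.cos ((n : ℝ) * θ) / ((q + q⁻¹) / 2 - Real.cos θ)
            - 2 * Real.cos (((n + 1 : ℕ) : ℝ) * θ) := by
        intro θ
        have h := (den_pos hq0 hq1 θ).ne'
        have hcos : Real.cos (((n + 1 + 1 : ℕ) : ℝ) * θ)
            = 2 * Real.cos θ * Real.cos (((n + 1 : ℕ) : ℝ) * θ) - Real.cos ((n : ℝ) * θ) := by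
          have e1 : ((n + 1 + 1 : ℕ) : ℝ) * θ = ((n + 1 : ℕ) : ℝ) * θ + θ := by
            push_cast; ring
          have e2 : (n : ℝ) * θ = ((n + 1 : ℕ) : ℝ) * θ - θ := by push_cast; ring
          rw [e1, e2, Real.cos_add, Real.cos_sub]; ring
        rw [hcos, show Real.cos θ = (q + q⁻¹) / 2 - ((q + q⁻¹) / 2 - Real.cos θ) from by ring]
        generalize hX : (q + q⁻¹) / 2 - Real.cos θ = X at h ⊢
        field_simp
        ring
      have hiA : IntervalIntegrable
          (fun θ => (q + q⁻¹) * (Real.cos (((n + 1 : ℕ) : ℝ) * θ)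
            / ((q + q⁻¹) / 2 - Real.cos θ))) volume 0 (2 * π) :=
        (integrable_cos_div hq0 hq1 _ _ _).const_mul _
      have hiB := integrable_cos_div hq0 hq1 ((n : ℝ)) 0 (2 * π)
      have hiC : IntervalIntegrable (fun θ => 2 * Real.cos (((n + 1 : ℕ) : ℝ) * θ))
          volume 0 (2 * π) :=
        ((Real.continuous_cos.comp (continuous_const.mul continuous_id)).intervalIntegrable
          _ _).const_mul 2
      rw [intervalIntegral.integral_congr (fun θ _ => hpt θ),
        intervalIntegral.integral_sub (hiA.sub hiB) hiC,
        intervalIntegral.integral_sub hiA hiB,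
        intervalIntegral.integral_const_mul, intervalIntegral.integral_const_mul,
        ih.2, ih.1, integral_cos_nat (n + 1) n.succ_ne_zero]
      generalize hQ : q⁻¹ = Q at hqq hs' ⊢
      field_simp
      linear_combination (2 * π * q ^ n) * hqq
  exact fun n => (key n).1

/-- the Poisson sine integrals vanish. -/
lemma poisson_Sn {q : ℝ} (hq0 : 0 < q) (hq1 : q < 1) (n : ℕ) :
    ∫ θ in (0:ℝ)..(2 * π), Real.sin ((n : ℝ) * θ) / ((q + q⁻¹) / 2 - Real.cos θ) = 0 := by
  have h := intervalIntegral.integral_comp_sub_left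
    (a := 0) (b := 2 * π)
    (fun θ => Real.sin ((n : ℝ) * θ) / ((q + q⁻¹) / 2 - Real.cos θ)) (2 * π)
  have hrefl : ∀ x : ℝ,
      Real.sin ((n : ℝ) * (2 * π - x)) / ((q + q⁻¹) / 2 - Real.cos (2 * π - x))
      = - (Real.sin ((n : ℝ) * x) / ((q + q⁻¹) / 2 - Real.cos x)) := by
    intro x
    rw [show (n : ℝ) * (2 * π - x) = (n : ℝ) * (2 * π) - (n : ℝ) * x from by ring,
      Real.sin_nat_mul_two_pi_sub, Real.cos_two_pi_sub]
    ring
  rw [intervalIntegral.integral_congr (fun x _ => hrefl x)] at h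
  rw [intervalIntegral.integral_neg] at h
  simp only [sub_self, sub_zero] at h
  linarith

end NPaux

set_option maxHeartbeats 1000000 in
open NPaux in
/-- For every integer n ≥ 0 and every ω ∈ [0, 2π), the density
φ_{1,n}(ω′) = cos(nω′)/Ξ(ω′) is a Neumann–Poincaré eigenfunction of the ellipse
with eigenvalue aₙ = 1/(2 e^{2nρ₀}); explicitly
(1/2π) ∫₀^{2π} (⟨x(ω)−x(ω′), ν(ω)⟩/|x(ω)−x(ω′)|²) cos(nω′) dω′
  = cos(nω)/(2 e^{2nρ₀} Ξ(ω)). -/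
theorem NP_eigenfunction_ellipse_cos (R₀ ρ₀ : ℝ) (hR : 0 < R₀) (hρ : 0 < ρ₀)
    (x₁ x₂ Ξ ν₁ ν₂ : ℝ → ℝ)
    (hx₁ : x₁ = fun ω => R₀ * Real.cos ω * Real.cosh ρ₀)
    (hx₂ : x₂ = fun ω => R₀ * Real.sin ω * Real.sinh ρ₀)
    (hΞ : Ξ = fun ω => R₀ * Real.sqrt ((Real.sinh ρ₀) ^ 2 + (Real.sin ω) ^ 2))
    (hν₁ : ν₁ = fun ω => R₀ * Real.cos ω * Real.sinh ρ₀ / Ξ ω)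
    (hν₂ : ν₂ = fun ω => R₀ * Real.sin ω * Real.cosh ρ₀ / Ξ ω)
    -- the Neumann–Poincaré kernel of the ellipse, extended at the removable
    -- singularity ω′ = ω by its limiting value −⟨x″(ω), ν(ω)⟩/(2|x′(ω)|²),
    -- where x″(ω) = −x(ω)
    (K : ℝ → ℝ → ℝ)
    (hK : K = fun ω ω' =>
      if (x₁ ω', x₂ ω') = (x₁ ω, x₂ ω) then
        (x₁ ω * ν₁ ω + x₂ ω * ν₂ ω) / (2 * (Ξ ω) ^ 2)
      else
        ((x₁ ω - x₁ ω') * ν₁ ω + (x₂ ω - x₂ ω') * ν₂ ω) /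
          ((x₁ ω - x₁ ω') ^ 2 + (x₂ ω - x₂ ω') ^ 2)) :
    ∀ n : ℕ, ∀ ω ∈ Set.Ico (0 : ℝ) (2 * Real.pi),
      (1 / (2 * Real.pi)) *
          ∫ ω' in (0 : ℝ)..(2 * Real.pi), K ω ω' * Real.cos ((n : ℝ) * ω')
        = Real.cos ((n : ℝ) * ω) / (2 * Real.exp (2 * (n : ℝ) * ρ₀) * Ξ ω) := by
  subst hx₁ hx₂ hΞ hν₁ hν₂
  intro n ω hω
  have hπ := Real.pi_pos
  set q := Real.exp (-(2 * ρ₀)) with hqdef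
  have hq0 : 0 < q := Real.exp_pos _
  have hq1 : q < 1 := by rw [hqdef]; apply Real.exp_lt_one_iff.2; linarith
  have hqinv : q⁻¹ = Real.exp (2 * ρ₀) := by rw [hqdef, ← Real.exp_neg, neg_neg]
  have hch2 : Real.cosh (2 * ρ₀) = (q + q⁻¹) / 2 := by
    rw [Real.cosh_eq, hqinv, hqdef]; ring
  have hsh2 : Real.sinh (2 * ρ₀) = (q⁻¹ - q) / 2 := by
    rw [Real.sinh_eq, hqinv, hqdef]
  have hshρ : 0 < Real.sinh ρ₀ := Real.sinh_pos_iff.2 hρ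
  have hchρ : 0 < Real.cosh ρ₀ := Real.cosh_pos ρ₀
  set Ξω := R₀ * Real.sqrt (Real.sinh ρ₀ ^ 2 + Real.sin ω ^ 2) with hΞω
  have hΞpos : 0 < Ξω := by
    apply mul_pos hR
    apply Real.sqrt_pos.2
    nlinarith [sq_nonneg (Real.sin ω)]
  have hΞsq : Ξω ^ 2 = R₀ ^ 2 * (Real.sinh ρ₀ ^ 2 + Real.sin ω ^ 2) := by
    rw [hΞω, mul_pow, Real.sq_sqrt (by nlinarith [sq_nonneg (Real.sin ω)] :
      (0:ℝ) ≤ Real.sinh ρ₀ ^ 2 + Real.sin ω ^ 2)]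
  have hker : ∀ ω' : ℝ, K ω ω'
      = Real.sinh (2 * ρ₀) / (2 * Ξω * (Real.cosh (2 * ρ₀) - Real.cos (ω + ω'))) := by
    intro ω'
    have hpy1 : Real.sin ω ^ 2 + Real.cos ω ^ 2 = 1 := Real.sin_sq_add_cos_sq ω
    have hpy2 : Real.sin ω' ^ 2 + Real.cos ω' ^ 2 = 1 := Real.sin_sq_add_cos_sq ω'
    have hcsh : Real.cosh ρ₀ ^ 2 = Real.sinh ρ₀ ^ 2 + 1 := Real.cosh_sq ρ₀
    have hden : 0 < Real.cosh (2 * ρ₀) - Real.cos (ω + ω') := by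
      have h1 := Real.cos_le_one (ω + ω')
      rw [Real.cosh_two_mul]
      nlinarith
    rw [Real.cos_add, Real.cosh_two_mul] at hden ⊢
    rw [Real.sinh_two_mul]
    rw [hK]
    dsimp only
    rw [← hΞω]
    by_cases hcase : (R₀ * Real.cos ω' * Real.cosh ρ₀, R₀ * Real.sin ω' * Real.sinh ρ₀)
        = (R₀ * Real.cos ω * Real.cosh ρ₀, R₀ * Real.sin ω * Real.sinh ρ₀)
    · rw [if_pos hcase]
      rw [Prod.mk.injEq] at hcase
      obtain ⟨h1, h2⟩ := hcase
      have hc : Real.cos ω' = Real.cos ω :=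
        mul_left_cancel₀ hR.ne' (mul_right_cancel₀ hchρ.ne' h1)
      have hs : Real.sin ω' = Real.sin ω :=
        mul_left_cancel₀ hR.ne' (mul_right_cancel₀ hshρ.ne' h2)
      rw [hc, hs] at hden ⊢
      rw [div_eq_div_iff (by positivity) (by positivity)]
      field_simp
      linear_combination
        (R₀ ^ 2 * (Real.cosh ρ₀ ^ 2 + Real.sinh ρ₀ ^ 2 - Real.cos ω ^ 2 + Real.sin ω ^ 2)
          - R₀ ^ 2) * hpy1
        + R₀ ^ 2 * hcsh - 2 * hΞsq
    · rw [if_neg hcase]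
      have hne : R₀ * Real.cos ω * Real.cosh ρ₀ - R₀ * Real.cos ω' * Real.cosh ρ₀ ≠ 0
          ∨ R₀ * Real.sin ω * Real.sinh ρ₀ - R₀ * Real.sin ω' * Real.sinh ρ₀ ≠ 0 := by
        by_contra hcon
        push_neg at hcon
        apply hcase
        rw [Prod.mk.injEq]
        constructor <;> linarith [hcon.1, hcon.2]
      have hD : 0 < (R₀ * Real.cos ω * Real.cosh ρ₀ - R₀ * Real.cos ω' * Real.cosh ρ₀) ^ 2
          + (R₀ * Real.sin ω * Real.sinh ρ₀ - R₀ * Real.sin ω' * Real.sinh ρ₀) ^ 2 := by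
        rcases hne with h | h
        · have := (sq_nonneg (R₀ * Real.cos ω * Real.cosh ρ₀
            - R₀ * Real.cos ω' * Real.cosh ρ₀)).lt_of_ne (Ne.symm (pow_ne_zero 2 h))
          nlinarith [sq_nonneg (R₀ * Real.sin ω * Real.sinh ρ₀
            - R₀ * Real.sin ω' * Real.sinh ρ₀)]
        · have := (sq_nonneg (R₀ * Real.sin ω * Real.sinh ρ₀
            - R₀ * Real.sin ω' * Real.sinh ρ₀)).lt_of_ne (Ne.symm (pow_ne_zero 2 h))
          nlinarith [sq_nonneg (R₀ * Real.cos ω * Real.cosh ρ₀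
            - R₀ * Real.cos ω' * Real.cosh ρ₀)]
      rw [div_eq_div_iff hD.ne' (by positivity)]
      field_simp
      linear_combination
        (Real.sinh ρ₀ ^ 2 - Real.cos ω * Real.cos ω' + Real.sin ω * Real.sin ω'
          + Real.cos ω' ^ 2) * hpy1
        + (-(Real.sinh ρ₀ ^ 2) - Real.sin ω ^ 2) * hpy2
        + (Real.cos ω ^ 2 + Real.sin ω ^ 2 - (Real.cos ω * Real.cos ω' + Real.sin ω * Real.sin ω')
          - (Real.cos ω - Real.cos ω') ^ 2) * hcsh
  have hint1 : ∀ ω' : ℝ, K ω ω' * Real.cos ((n:ℝ) * ω')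
      = (q⁻¹ - q) / 2 / (2 * Ξω)
        * (Real.cos ((n:ℝ) * ω') / ((q + q⁻¹) / 2 - Real.cos (ω + ω'))) := by
    intro ω'
    rw [hker ω', hsh2, hch2, div_mul_eq_mul_div, div_mul_div_comm]
  rw [intervalIntegral.integral_congr (fun ω' _ => hint1 ω'),
    intervalIntegral.integral_const_mul]
  have hshift : ∀ ω' : ℝ, Real.cos ((n:ℝ) * ω') / ((q + q⁻¹) / 2 - Real.cos (ω + ω'))
      = (fun θ => Real.cos ((n:ℝ) * θ - (n:ℝ) * ω) / ((q + q⁻¹) / 2 - Real.cos θ)) (ω + ω') := by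
    intro ω'
    dsimp only
    rw [show (n:ℝ) * (ω + ω') - (n:ℝ) * ω = (n:ℝ) * ω' from by ring]
  rw [intervalIntegral.integral_congr (fun ω' _ => hshift ω'),
    intervalIntegral.integral_comp_add_left
      (fun θ => Real.cos ((n:ℝ) * θ - (n:ℝ) * ω) / ((q + q⁻¹) / 2 - Real.cos θ)) ω]
  have hper : Function.Periodic
      (fun θ => Real.cos ((n:ℝ) * θ - (n:ℝ) * ω) / ((q + q⁻¹) / 2 - Real.cos θ)) (2 * π) := by
    intro θ
    dsimp only
    rw [show (n:ℝ) * (θ + 2 * π) - (n:ℝ) * ω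
        = ((n:ℝ) * θ - (n:ℝ) * ω) + (n:ℝ) * (2 * π) from by ring,
      Real.cos_add_nat_mul_two_pi, Real.cos_add_two_pi]
  have hshift2 := hper.intervalIntegral_add_eq ω 0
  simp only [zero_add] at hshift2
  rw [show ω + 0 = ω from add_zero ω, show ω + 2 * π = ω + 2 * π from rfl, hshift2]
  have hexp : ∀ θ : ℝ, Real.cos ((n:ℝ) * θ - (n:ℝ) * ω) / ((q + q⁻¹) / 2 - Real.cos θ)
      = Real.cos ((n:ℝ) * ω) * (Real.cos ((n:ℝ) * θ) / ((q + q⁻¹) / 2 - Real.cos θ))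
        + Real.sin ((n:ℝ) * ω) * (Real.sin ((n:ℝ) * θ) / ((q + q⁻¹) / 2 - Real.cos θ)) := by
    intro θ; rw [Real.cos_sub]; ring
  rw [intervalIntegral.integral_congr (fun θ _ => hexp θ),
    intervalIntegral.integral_add ((integrable_cos_div hq0 hq1 _ _ _).const_mul _)
      ((integrable_sin_div hq0 hq1 _ _ _).const_mul _),
    intervalIntegral.integral_const_mul, intervalIntegral.integral_const_mul,
    poisson_In hq0 hq1 n, poisson_Sn hq0 hq1 n]
  have hqn : q ^ n = (Real.exp (2 * (n:ℝ) * ρ₀))⁻¹ := by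
    rw [hqdef, ← Real.exp_neg, ← Real.exp_nat_mul]
    congr 1; ring
  have hsne : q⁻¹ - q ≠ 0 := by
    have := s_pos hq0 hq1; intro hc; rw [hc] at this; norm_num at this
  have hexppos : (0:ℝ) < Real.exp (2 * (n:ℝ) * ρ₀) := Real.exp_pos _
  rw [hqn, mul_zero, add_zero]
  have hSne : (q⁻¹ - q) / 2 ≠ 0 := hsne ∘ (by intro hc; linarith)
  generalize (q⁻¹ - q) / 2 = S at hSne ⊢
  clear_value Ξω
  rw [hΞω]
  field_simp
end

section
/- For every integer n ≥ 1 and every ω ∈ [0, 2π), the density φ_{2,n}(ω′) = sin(nω′)/Ξ(ω′) satisfies K*[φ_{2,n}](ω) = −(1/(2 e^{2nρ₀})) · sin(nω)/Ξ(ω); explicitly, (1/2π) ∫₀^{2π} (⟨x(ω) − x(ω′), ν(ω)⟩ / |x(ω) − x(ω′)|²) · sin(nω′) dω′ = −sin(nω) / (2 e^{2nρ₀} Ξ(ω)). That is, φ_{2,n} is an eigenfunction of the Neumann–Poincaré operator of the ellipse with eigenvalue −aₙ = −1/(2 e^{2nρ₀}). -/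
open Real intervalIntegral



lemma key_scalar (c s c' s' S C : ℝ) (h1 : c^2+s^2=1) (h2 : c'^2+s'^2=1) (h3 : C^2 - S^2 = 1) :
    (1-c*c'-s*s')*(C^2+S^2-(c*c'-s*s')) = (c-c')^2*C^2 + (s-s')^2*S^2 := by
  linear_combination (c*c'-s*s'+s^2+s'^2-1)*h3 + (c'^2-C^2)*h1 + (1-s^2-C^2)*h2

lemma diag_scalar (R S C c s X : ℝ) (hX : X ≠ 0)
    (h1 : c^2+s^2=1) (h3 : C^2 - S^2 = 1) (hXsq : X^2 = R^2*(S^2+s^2))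
    (hB : C^2 + S^2 - (c*c - s*s) ≠ 0) :
    (R*c*C*(R*c*S/X) + R*s*S*(R*s*C/X)) / (2*X^2)
      = 2*S*C/(2*X*(C^2 + S^2 - (c*c - s*s))) := by
  rw [div_eq_div_iff (by positivity) (mul_ne_zero (mul_ne_zero two_ne_zero hX) hB)]
  field_simp
  linear_combination (R^2*C*S*(C^2+S^2-(c^2-s^2)-1))*h1 + (R^2*C*S)*h3 + (-2*C*S)*hXsq

lemma offdiag_scalar (R S C c s c' s' X : ℝ) (hX : X ≠ 0)
    (h1 : c^2+s^2=1) (h2 : c'^2+s'^2=1) (h3 : C^2 - S^2 = 1)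
    (hD : (R*c*C - R*c'*C)^2 + (R*s*S - R*s'*S)^2 ≠ 0)
    (hB : C^2 + S^2 - (c*c' - s*s') ≠ 0) :
    ((R*c*C - R*c'*C)*(R*c*S/X) + (R*s*S - R*s'*S)*(R*s*C/X)) /
        ((R*c*C - R*c'*C)^2 + (R*s*S - R*s'*S)^2)
      = 2*S*C/(2*X*(C^2 + S^2 - (c*c' - s*s'))) := by
  rw [div_eq_div_iff hD (mul_ne_zero (mul_ne_zero two_ne_zero hX) hB)]
  field_simp
  linear_combination (R^2*C*S) * (key_scalar c s c' s' S C h1 h2 h3)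
    + (R^2*C*S*(C^2+S^2-(c*c'-s*s')))*h1

lemma kernel_formula (R₀ ρ₀ : ℝ) (hR : 0 < R₀) (hρ : 0 < ρ₀)
    (x₁ x₂ Ξ ν₁ ν₂ : ℝ → ℝ)
    (hx₁ : x₁ = fun ω => R₀ * Real.cos ω * Real.cosh ρ₀)
    (hx₂ : x₂ = fun ω => R₀ * Real.sin ω * Real.sinh ρ₀)
    (hΞ : Ξ = fun ω => R₀ * Real.sqrt ((Real.sinh ρ₀) ^ 2 + (Real.sin ω) ^ 2))
    (hν₁ : ν₁ = fun ω => R₀ * Real.cos ω * Real.sinh ρ₀ / Ξ ω)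
    (hν₂ : ν₂ = fun ω => R₀ * Real.sin ω * Real.cosh ρ₀ / Ξ ω)
    (K : ℝ → ℝ → ℝ)
    (hK : K = fun ω ω' =>
      if (x₁ ω', x₂ ω') = (x₁ ω, x₂ ω) then
        (x₁ ω * ν₁ ω + x₂ ω * ν₂ ω) / (2 * (Ξ ω) ^ 2)
      else
        ((x₁ ω - x₁ ω') * ν₁ ω + (x₂ ω - x₂ ω') * ν₂ ω) /
          ((x₁ ω - x₁ ω') ^ 2 + (x₂ ω - x₂ ω') ^ 2)) :
    ∀ ω ω' : ℝ, K ω ω' =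
      Real.sinh (2*ρ₀) / (2 * Ξ ω * (Real.cosh (2*ρ₀) - Real.cos (ω + ω'))) := by
  intro ω ω'
  have hSpos : 0 < Real.sinh ρ₀ := Real.sinh_pos_iff.2 hρ
  have hCpos : 0 < Real.cosh ρ₀ := Real.cosh_pos ρ₀
  have hargpos : 0 < (Real.sinh ρ₀)^2 + (Real.sin ω)^2 := by positivity
  have hΞpos : 0 < Ξ ω := by
    rw [hΞ]; exact mul_pos hR (Real.sqrt_pos.2 hargpos)
  have hΞsq : (Ξ ω)^2 = R₀^2 * ((Real.sinh ρ₀)^2 + (Real.sin ω)^2) := by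
    rw [hΞ]; simp only []
    rw [mul_pow, Real.sq_sqrt hargpos.le]
  have h1 : (Real.cos ω)^2 + (Real.sin ω)^2 = 1 := Real.cos_sq_add_sin_sq ω
  have h2 : (Real.cos ω')^2 + (Real.sin ω')^2 = 1 := Real.cos_sq_add_sin_sq ω'
  have h3 : (Real.cosh ρ₀)^2 - (Real.sinh ρ₀)^2 = 1 := Real.cosh_sq_sub_sinh_sq ρ₀
  have hB2 : ∀ a b : ℝ, a^2 + b^2 = 1 →
      0 < (Real.cosh ρ₀)^2 + (Real.sinh ρ₀)^2 - (Real.cos ω * a - Real.sin ω * b) := by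
    intro a b hab
    have habs : Real.cos ω * a - Real.sin ω * b ≤ 1 := by
      nlinarith [sq_nonneg (Real.cos ω - a), sq_nonneg (Real.sin ω + b), h1]
    nlinarith [sq_nonneg (Real.sinh ρ₀)]
  rw [hK]
  simp only []
  rw [Real.cosh_two_mul, Real.sinh_two_mul, Real.cos_add]
  by_cases h : (x₁ ω', x₂ ω') = (x₁ ω, x₂ ω)
  · rw [if_pos h]
    have e1 : x₁ ω' = x₁ ω := congrArg Prod.fst h
    have e2 : x₂ ω' = x₂ ω := congrArg Prod.snd h
    rw [hx₁] at e1; rw [hx₂] at e2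
    simp only [] at e1 e2
    have hc : Real.cos ω' = Real.cos ω := by
      have t1 := mul_right_cancel₀ hCpos.ne' e1
      exact mul_left_cancel₀ hR.ne' t1
    have hs : Real.sin ω' = Real.sin ω := by
      have t1 := mul_right_cancel₀ hSpos.ne' e2
      exact mul_left_cancel₀ hR.ne' t1
    rw [hν₁, hν₂, hx₁, hx₂]
    simp only []
    rw [hc, hs]
    exact diag_scalar R₀ (Real.sinh ρ₀) (Real.cosh ρ₀) (Real.cos ω) (Real.sin ω) (Ξ ω)
      hΞpos.ne' h1 h3 hΞsq (hB2 (Real.cos ω) (Real.sin ω) h1).ne'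
  · rw [if_neg h]
    rw [hν₁, hν₂, hx₁, hx₂]
    simp only []
    have hD : (R₀ * Real.cos ω * Real.cosh ρ₀ - R₀ * Real.cos ω' * Real.cosh ρ₀)^2
        + (R₀ * Real.sin ω * Real.sinh ρ₀ - R₀ * Real.sin ω' * Real.sinh ρ₀)^2 ≠ 0 := by
      intro hz
      apply h
      have hnn1 : (0:ℝ) ≤ (R₀ * Real.cos ω * Real.cosh ρ₀ - R₀ * Real.cos ω' * Real.cosh ρ₀)^2 := sq_nonneg _
      have hnn2 : (0:ℝ) ≤ (R₀ * Real.sin ω * Real.sinh ρ₀ - R₀ * Real.sin ω' * Real.sinh ρ₀)^2 := sq_nonneg _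
      have hz1 : (R₀ * Real.cos ω * Real.cosh ρ₀ - R₀ * Real.cos ω' * Real.cosh ρ₀)^2 = 0 := by nlinarith
      have hz2 : (R₀ * Real.sin ω * Real.sinh ρ₀ - R₀ * Real.sin ω' * Real.sinh ρ₀)^2 = 0 := by nlinarith
      have e1 : x₁ ω' = x₁ ω := by
        rw [hx₁]; simp only []
        have := pow_eq_zero_iff (n := 2) (by norm_num) |>.1 hz1
        linarith [sub_eq_zero.1 this]
      have e2 : x₂ ω' = x₂ ω := by
        rw [hx₂]; simp only []
        have := pow_eq_zero_iff (n := 2) (by norm_num) |>.1 hz2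
        linarith [sub_eq_zero.1 this]
      rw [e1, e2]
    exact offdiag_scalar R₀ (Real.sinh ρ₀) (Real.cosh ρ₀) (Real.cos ω) (Real.sin ω)
      (Real.cos ω') (Real.sin ω') (Ξ ω) hΞpos.ne' h1 h2 h3 hD
      (hB2 (Real.cos ω') (Real.sin ω') h2).ne'


lemma int_sin_lin (m : ℤ) (c : ℝ) :
    ∫ t in (0:ℝ)..(2*π), Real.sin (m*t + c) = if m = 0 then 2*π*Real.sin c else 0 := by
  rcases eq_or_ne m 0 with hm | hm
  · subst hm
    simp only [Int.cast_zero, zero_mul, zero_add, if_pos rfl]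
    rw [intervalIntegral.integral_const]
    simp [smul_eq_mul]
  · rw [if_neg hm]
    have hm' : (m:ℝ) ≠ 0 := Int.cast_ne_zero.2 hm
    rw [intervalIntegral.integral_comp_mul_add Real.sin hm' c, integral_sin]
    rw [mul_zero, zero_add, smul_eq_mul]
    have : (m:ℝ) * (2*π) + c = c + m * (2*π) := by ring
    rw [this, Real.cos_add_int_mul_two_pi]
    ring

lemma int_cos_mul_sin (k n : ℕ) (hn : 1 ≤ n) (ω : ℝ) :
    ∫ t in (0:ℝ)..(2*π), Real.cos (k*(ω+t)) * Real.sin (n*t)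
      = if k = n then -π * Real.sin (n*ω) else 0 := by
  have hid : ∀ t : ℝ, Real.cos (k*(ω+t)) * Real.sin (n*t)
      = (1/2) * Real.sin ((((n:ℤ)+(k:ℤ) : ℤ):ℝ) * t + (k*ω))
        + (1/2) * Real.sin ((((n:ℤ)-(k:ℤ) : ℤ):ℝ) * t + (-(k*ω))) := by
    intro t
    have e1 : (((n:ℤ)+(k:ℤ) : ℤ):ℝ) * t + (k*ω) = (n*t) + (k*(ω+t)) := by push_cast; ring
    have e2 : (((n:ℤ)-(k:ℤ) : ℤ):ℝ) * t + (-(k*ω)) = (n*t) - (k*(ω+t)) := by push_cast; ring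
    rw [e1, e2, Real.sin_add, Real.sin_sub]
    ring
  rw [intervalIntegral.integral_congr (g := fun t =>
      (1/2) * Real.sin ((((n:ℤ)+(k:ℤ) : ℤ):ℝ) * t + (k*ω))
        + (1/2) * Real.sin ((((n:ℤ)-(k:ℤ) : ℤ):ℝ) * t + (-(k*ω))))
    (fun t _ => hid t)]
  rw [intervalIntegral.integral_add
    (Continuous.intervalIntegrable (by fun_prop) _ _)
    (Continuous.intervalIntegrable (by fun_prop) _ _)]
  rw [intervalIntegral.integral_const_mul, intervalIntegral.integral_const_mul,
    int_sin_lin, int_sin_lin]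
  have hne : (n:ℤ) + (k:ℤ) ≠ 0 := by positivity
  rw [if_neg hne]
  by_cases hk : k = n
  · subst hk
    rw [if_pos (by ring), if_pos rfl]
    rw [Real.sin_neg]
    ring
  · rw [if_neg (by omega), if_neg hk]
    ring


lemma poisson_re_val (r cv sv : ℝ) (hr0 : 0 < r) (hr1 : r < 1) (h : cv^2+sv^2=1) :
    2 * ((r*cv) * (1 - r*cv) / ((1-r*cv)^2 + (r*sv)^2)
        + (r*sv) * (-(r*sv)) / ((1-r*cv)^2 + (r*sv)^2))
      = (1-r^2)/(1+r^2-2*r*cv) - 1 := by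
  have hcv : cv ≤ 1 := by nlinarith [sq_nonneg sv]
  have hDeq : (1-r*cv)^2 + (r*sv)^2 = 1+r^2-2*r*cv := by linear_combination r^2*h
  rw [hDeq]
  have hd : 0 < 1+r^2-2*r*cv := by nlinarith [sq_nonneg (1-r)]
  field_simp
  linear_combination (-2*r^2) * h

lemma quot_eq (r cv : ℝ) (hr0 : 0 < r) (hr1 : r < 1) (hcv : cv ≤ 1) :
    ((r⁻¹ - r)/2) / (((r⁻¹ + r)/2) - cv) = (1-r^2)/(1+r^2-2*r*cv) := by
  have hd : 0 < 1+r^2-2*r*cv := by nlinarith [sq_nonneg (1-r)]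
  have hden : 0 < ((r⁻¹ + r)/2) - cv := by
    have e : ((r⁻¹ + r)/2) - cv = (1+r^2-2*r*cv)/(2*r) := by field_simp
    rw [e]; positivity
  rw [div_eq_div_iff hden.ne' hd.ne']
  field_simp

lemma poisson_hasSum (b : ℝ) (hb : 0 < b) (v : ℝ) :
    HasSum (fun j : ℕ => 2 * (Real.exp (-b))^(j+1) * Real.cos ((j+1)*v))
      (Real.sinh b / (Real.cosh b - Real.cos v) - 1) := by
  set r := Real.exp (-b) with hrdef
  have hr0 : 0 < r := Real.exp_pos _
  have hr1 : r < 1 := Real.exp_lt_one_iff.2 (by linarith)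
  set x : ℂ := (r : ℂ) * Complex.exp (v * Complex.I) with hxdef
  have hxn : ‖x‖ < 1 := by
    rw [hxdef, norm_mul, Complex.norm_exp_ofReal_mul_I, mul_one, Complex.norm_real,
      Real.norm_of_nonneg hr0.le]
    exact hr1
  have hgeo : HasSum (fun j : ℕ => x ^ (j+1)) (x * (1 - x)⁻¹) := by
    have := (hasSum_geometric_of_norm_lt_one hxn).mul_left x
    refine this.congr_fun fun j => ?_
    rw [pow_succ']
  have hre : HasSum (fun j : ℕ => (x ^ (j+1)).re) ((x * (1 - x)⁻¹).re) :=
    Complex.hasSum_re hgeo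
  have hterm : ∀ j : ℕ, (x ^ (j+1)).re = r^(j+1) * Real.cos ((j+1)*v) := by
    intro j
    rw [hxdef, mul_pow, ← Complex.ofReal_pow, ← Complex.exp_nat_mul]
    have e : ((j+1 : ℕ):ℂ) * ((v:ℂ) * Complex.I) = ((((j+1 : ℕ):ℝ) * v : ℝ):ℂ) * Complex.I := by
      push_cast; ring
    rw [e, Complex.re_ofReal_mul, Complex.exp_ofReal_mul_I_re]
    push_cast; ring
  have hval : 2 * (x * (1 - x)⁻¹).re = Real.sinh b / (Real.cosh b - Real.cos v) - 1 := by
    rw [← div_eq_mul_inv, Complex.div_re]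
    have hxre : x.re = r * Real.cos v := by
      rw [hxdef]
      simp [Complex.exp_ofReal_mul_I_re]
    have hxim : x.im = r * Real.sin v := by
      rw [hxdef]
      simp [Complex.exp_ofReal_mul_I_im]
    have h1re : (1 - x).re = 1 - r * Real.cos v := by simp [hxre]
    have h1im : (1 - x).im = -(r * Real.sin v) := by simp [hxim]
    have hnsq : Complex.normSq (1 - x) = (1 - r*Real.cos v)^2 + (r*Real.sin v)^2 := by
      rw [Complex.normSq_apply, h1re, h1im]; ring
    rw [hxre, hxim, h1re, h1im, hnsq]
    have hsinh : Real.sinh b = (r⁻¹ - r)/2 := by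
      rw [Real.sinh_eq, hrdef, ← Real.exp_neg]; ring_nf
    have hcosh : Real.cosh b = (r⁻¹ + r)/2 := by
      rw [Real.cosh_eq, hrdef, ← Real.exp_neg]; ring_nf
    rw [hsinh, hcosh, quot_eq r (Real.cos v) hr0 hr1 (Real.cos_le_one v)]
    have := poisson_re_val r (Real.cos v) (Real.sin v) hr0 hr1 (Real.cos_sq_add_sin_sq v)
    linarith [this]
  have h2 := hre.mul_left 2
  rw [hval] at h2
  refine h2.congr_fun fun j => ?_
  rw [hterm j]
  push_cast; ring




lemma core_integral (b : ℝ) (hb : 0 < b) (n : ℕ) (hn : 1 ≤ n) (ω : ℝ) :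
    ∫ t in (0:ℝ)..(2*π), Real.sinh b / (Real.cosh b - Real.cos (ω+t)) * Real.sin (n*t)
      = -(2*π) * (Real.exp (-b))^n * Real.sin (n*ω) := by
  set r := Real.exp (-b) with hrdef
  have hr0 : 0 < r := Real.exp_pos _
  have hr1 : r < 1 := Real.exp_lt_one_iff.2 (by linarith)
  have hne : ∀ t : ℝ, Real.cosh b - Real.cos (ω+t) ≠ 0 := by
    intro t
    have h2 : 1 < Real.cosh b := Real.one_lt_cosh.2 hb.ne'
    have := Real.cos_le_one (ω+t)
    exact ne_of_gt (by linarith)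
  -- the continuous summand functions
  set g : ℕ → C(ℝ, ℝ) := fun j =>
    ⟨fun t => 2 * r^(j+1) * Real.cos (((j+1 : ℕ):ℝ)*(ω+t)) * Real.sin ((n:ℝ)*t),
     by fun_prop⟩ with hgdef
  have hnorm : ∀ j, ‖(g j).restrict (⟨Set.uIcc (0:ℝ) (2*π), isCompact_uIcc⟩ : TopologicalSpace.Compacts ℝ)‖ ≤ 2*r^(j+1) := by
    intro j
    refine ContinuousMap.norm_le _ (by positivity) |>.2 fun t => ?_
    simp only [ContinuousMap.restrict_apply, hgdef, ContinuousMap.coe_mk]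
    rw [Real.norm_eq_abs, abs_mul, abs_mul,
      abs_of_pos (show (0:ℝ) < 2*r^(j+1) by positivity)]
    have h1 := abs_cos_le_one (((j+1 : ℕ):ℝ)*(ω+(t:ℝ)))
    have h2 := abs_sin_le_one ((n:ℝ)*(t:ℝ))
    calc 2*r^(j+1) * |Real.cos (((j+1 : ℕ):ℝ)*(ω+(t:ℝ)))| * |Real.sin ((n:ℝ)*(t:ℝ))|
        ≤ 2*r^(j+1) * |Real.cos (((j+1 : ℕ):ℝ)*(ω+(t:ℝ)))| :=
          mul_le_of_le_one_right (by positivity) h2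
      _ ≤ 2*r^(j+1) * 1 := mul_le_mul_of_nonneg_left h1 (by positivity)
      _ = 2*r^(j+1) := mul_one _
  have hsummable : Summable fun j : ℕ =>
      ‖(g j).restrict (⟨Set.uIcc (0:ℝ) (2*π), isCompact_uIcc⟩ : TopologicalSpace.Compacts ℝ)‖ := by
    refine Summable.of_nonneg_of_le (fun j => norm_nonneg _) hnorm ?_
    have : Summable fun j : ℕ => r^(j+1) := by
      have := (summable_geometric_of_lt_one hr0.le hr1).mul_left r
      refine this.congr fun j => ?_
      rw [pow_succ']
    exact this.mul_left 2
  have hsum := intervalIntegral.hasSum_intervalIntegral_of_summable_norm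
    (a := 0) (b := 2*π) hsummable
  -- value of each integral
  have hint : ∀ j : ℕ, (∫ t in (0:ℝ)..(2*π), g j t)
      = if j = n - 1 then -(2*π) * r^n * Real.sin (n*ω) else 0 := by
    intro j
    have : (∫ t in (0:ℝ)..(2*π), g j t)
        = 2*r^(j+1) * ∫ t in (0:ℝ)..(2*π), Real.cos (((j+1:ℕ):ℝ)*(ω+t)) * Real.sin ((n:ℝ)*t) := by
      rw [← intervalIntegral.integral_const_mul]
      refine intervalIntegral.integral_congr fun t _ => ?_
      simp only [hgdef, ContinuousMap.coe_mk]; ring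
    rw [this, int_cos_mul_sin (j+1) n hn ω]
    by_cases hj : j = n - 1
    · rw [if_pos (by omega), if_pos hj]
      have : j + 1 = n := by omega
      rw [this]; ring
    · rw [if_neg (by omega), if_neg hj]; ring
  -- sum of the integrals
  have hsum2 : HasSum (fun j : ℕ => ∫ t in (0:ℝ)..(2*π), g j t)
      (-(2*π) * r^n * Real.sin (n*ω)) := by
    rw [show (fun j : ℕ => ∫ t in (0:ℝ)..(2*π), g j t)
        = fun j => if j = n - 1 then -(2*π) * r^n * Real.sin (n*ω) else 0 from funext hint]
    exact hasSum_ite_eq (n-1) _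
  have hval := hsum.unique hsum2
  -- identify the tsum integrand
  have htsum : ∀ t : ℝ, (∑' j, g j t)
      = (Real.sinh b / (Real.cosh b - Real.cos (ω+t)) - 1) * Real.sin ((n:ℝ)*t) := by
    intro t
    have hp := (poisson_hasSum b hb (ω+t)).mul_right (Real.sin ((n:ℝ)*t))
    refine HasSum.tsum_eq (hp.congr_fun fun j => ?_)
    simp only [hgdef, ContinuousMap.coe_mk]
    push_cast; ring
  have hval2 : (∫ t in (0:ℝ)..(2*π),
      (Real.sinh b / (Real.cosh b - Real.cos (ω+t)) - 1) * Real.sin ((n:ℝ)*t))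
      = -(2*π) * r^n * Real.sin (n*ω) := by
    rw [← hval]
    exact intervalIntegral.integral_congr fun t _ => (htsum t).symm
  -- final splitting
  have hsin0 : (∫ t in (0:ℝ)..(2*π), Real.sin ((n:ℝ)*t)) = 0 := by
    have e : (∫ t in (0:ℝ)..(2*π), Real.sin ((n:ℝ)*t))
        = ∫ t in (0:ℝ)..(2*π), Real.sin ((((n:ℤ)):ℝ)*t + 0) := by
      refine intervalIntegral.integral_congr fun t _ => ?_
      push_cast; ring_nf
    rw [e, int_sin_lin, if_neg (by omega : (n:ℤ) ≠ 0)]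
  have hsplit : (∫ t in (0:ℝ)..(2*π), Real.sinh b / (Real.cosh b - Real.cos (ω+t)) * Real.sin ((n:ℝ)*t))
      = (∫ t in (0:ℝ)..(2*π), (Real.sinh b / (Real.cosh b - Real.cos (ω+t)) - 1) * Real.sin ((n:ℝ)*t))
        + ∫ t in (0:ℝ)..(2*π), Real.sin ((n:ℝ)*t) := by
    rw [← intervalIntegral.integral_add]
    · refine intervalIntegral.integral_congr fun t _ => ?_
      ring
    · apply Continuous.intervalIntegrable
      have hc : Continuous fun t => Real.sinh b / (Real.cosh b - Real.cos (ω+t)) :=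
        continuous_const.div
          (continuous_const.sub (Real.continuous_cos.comp (continuous_const.add continuous_id)))
          hne
      exact (hc.sub continuous_const).mul
        (Real.continuous_sin.comp (continuous_const.mul continuous_id))
    · exact (Real.continuous_sin.comp (continuous_const.mul continuous_id)).intervalIntegrable _ _
  rw [hsplit, hsin0, hval2]
  ring




/-- For every integer n ≥ 1 and every ω ∈ [0, 2π), the density
φ_{2,n}(ω′) = sin(nω′)/Ξ(ω′) is a Neumann–Poincaré eigenfunction of the ellipse
with eigenvalue −aₙ = −1/(2 e^{2nρ₀}); explicitly
(1/2π) ∫₀^{2π} (⟨x(ω)−x(ω′), ν(ω)⟩/|x(ω)−x(ω′)|²) sin(nω′) dω′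
  = −sin(nω)/(2 e^{2nρ₀} Ξ(ω)). -/
theorem NP_eigenfunction_ellipse_sin (R₀ ρ₀ : ℝ) (hR : 0 < R₀) (hρ : 0 < ρ₀)
    (x₁ x₂ Ξ ν₁ ν₂ : ℝ → ℝ)
    (hx₁ : x₁ = fun ω => R₀ * Real.cos ω * Real.cosh ρ₀)
    (hx₂ : x₂ = fun ω => R₀ * Real.sin ω * Real.sinh ρ₀)
    (hΞ : Ξ = fun ω => R₀ * Real.sqrt ((Real.sinh ρ₀) ^ 2 + (Real.sin ω) ^ 2))
    (hν₁ : ν₁ = fun ω => R₀ * Real.cos ω * Real.sinh ρ₀ / Ξ ω)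
    (hν₂ : ν₂ = fun ω => R₀ * Real.sin ω * Real.cosh ρ₀ / Ξ ω)
    -- the Neumann–Poincaré kernel of the ellipse, extended at the removable
    -- singularity ω′ = ω by its limiting value −⟨x″(ω), ν(ω)⟩/(2|x′(ω)|²),
    -- where x″(ω) = −x(ω)
    (K : ℝ → ℝ → ℝ)
    (hK : K = fun ω ω' =>
      if (x₁ ω', x₂ ω') = (x₁ ω, x₂ ω) then
        (x₁ ω * ν₁ ω + x₂ ω * ν₂ ω) / (2 * (Ξ ω) ^ 2)
      else
        ((x₁ ω - x₁ ω') * ν₁ ω + (x₂ ω - x₂ ω') * ν₂ ω) /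
          ((x₁ ω - x₁ ω') ^ 2 + (x₂ ω - x₂ ω') ^ 2)) :
    ∀ n : ℕ, 1 ≤ n → ∀ ω ∈ Set.Ico (0 : ℝ) (2 * Real.pi),
      (1 / (2 * Real.pi)) *
          ∫ ω' in (0 : ℝ)..(2 * Real.pi), K ω ω' * Real.sin ((n : ℝ) * ω')
        = -(Real.sin ((n : ℝ) * ω) / (2 * Real.exp (2 * (n : ℝ) * ρ₀) * Ξ ω)) := by
  intro n hn ω _
  have hKF := kernel_formula R₀ ρ₀ hR hρ x₁ x₂ Ξ ν₁ ν₂ hx₁ hx₂ hΞ hν₁ hν₂ K hK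
  have hΞpos : 0 < Ξ ω := by
    rw [hΞ]
    have hSpos : 0 < Real.sinh ρ₀ := Real.sinh_pos_iff.2 hρ
    exact mul_pos hR (Real.sqrt_pos.2 (by positivity))
  have hb : 0 < 2*ρ₀ := by linarith
  have hstep : (∫ ω' in (0 : ℝ)..(2 * Real.pi), K ω ω' * Real.sin ((n : ℝ) * ω'))
      = (1/(2 * Ξ ω)) * ∫ t in (0:ℝ)..(2*Real.pi),
          Real.sinh (2*ρ₀) / (Real.cosh (2*ρ₀) - Real.cos (ω+t)) * Real.sin ((n:ℝ)*t) := by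
    rw [← intervalIntegral.integral_const_mul]
    refine intervalIntegral.integral_congr fun t _ => ?_
    rw [hKF ω t]
    field_simp
  rw [hstep, core_integral (2*ρ₀) hb n hn ω]
  have hexp : Real.exp (-(2*ρ₀))^n = (Real.exp (2*(n:ℝ)*ρ₀))⁻¹ := by
    rw [← Real.exp_nat_mul, ← Real.exp_neg]
    congr 1
    push_cast; ring
  rw [hexp]
  have hπ : Real.pi ≠ 0 := Real.pi_ne_zero
  have he : Real.exp (2*(n:ℝ)*ρ₀) ≠ 0 := (Real.exp_pos _).ne'
  field_simp
end

section
/- Let n ≥ 1 be an integer and let y ∈ ℝ² have elliptic coordinates (ρ, ω) with 0 < ρ < ρ₀ (y inside the ellipse). Then (1/2π) ∫₀^{2π} ln|y − x(ω′)| · cos(nω′) dω′ = −((e^{nρ} + e^{−nρ}) / (2n e^{nρ₀})) · cos(nω). That is, the single-layer potential of the density φ_{1,n}(ω′) = cos(nω′)/Ξ(ω′) with respect to arc length equals −((e^{nρ} + e^{−nρ})/(2n e^{nρ₀})) cos(nω) inside the ellipse. -/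
open Real intervalIntegral MeasureTheory

lemma sin_two_pi_int (m : ℤ) : Real.sin ((m:ℝ) * (2 * π)) = 0 := by
  have : (m:ℝ) * (2 * π) = ((2*m : ℤ):ℝ) * π := by push_cast; ring
  rw [this, Real.sin_int_mul_pi]

lemma cos_two_pi_int (m : ℤ) : Real.cos ((m:ℝ) * (2 * π)) = 1 := by
  simpa using Real.cos_int_mul_two_pi m

lemma integral_cos_int (m : ℤ) (hm : m ≠ 0) :
    ∫ x in (0:ℝ)..(2*π), Real.cos ((m:ℝ) * x) = 0 := by
  have hm' : (m:ℝ) ≠ 0 := Int.cast_ne_zero.mpr hm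
  have hderiv : ∀ x ∈ Set.uIcc (0:ℝ) (2*π),
      HasDerivAt (fun x => Real.sin ((m:ℝ)*x) / m) (Real.cos ((m:ℝ)*x)) x := by
    intro x _
    have h1 : HasDerivAt (fun x : ℝ => (m:ℝ)*x) (m:ℝ) x := by
      simpa using (hasDerivAt_id x).const_mul (m:ℝ)
    have h2 := (Real.hasDerivAt_sin ((m:ℝ)*x)).comp x h1
    have h3 := h2.div_const (m:ℝ)
    simpa [mul_comm, mul_div_assoc, mul_div_cancel_left₀ _ hm'] using h3
  rw [intervalIntegral.integral_eq_sub_of_hasDerivAt hderiv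
    (Continuous.intervalIntegrable (by fun_prop) _ _)]
  simp [sin_two_pi_int m]

lemma integral_sin_int (m : ℤ) :
    ∫ x in (0:ℝ)..(2*π), Real.sin ((m:ℝ) * x) = 0 := by
  rcases eq_or_ne m 0 with rfl | hm
  · simp
  have hm' : (m:ℝ) ≠ 0 := Int.cast_ne_zero.mpr hm
  have hderiv : ∀ x ∈ Set.uIcc (0:ℝ) (2*π),
      HasDerivAt (fun x => -Real.cos ((m:ℝ)*x) / m) (Real.sin ((m:ℝ)*x)) x := by
    intro x _
    have h1 : HasDerivAt (fun x : ℝ => (m:ℝ)*x) (m:ℝ) x := by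
      simpa using (hasDerivAt_id x).const_mul (m:ℝ)
    have h2 := ((Real.hasDerivAt_cos ((m:ℝ)*x)).comp x h1).neg
    have h3 := h2.div_const (m:ℝ)
    simpa [mul_comm, mul_div_assoc, mul_div_cancel_left₀ _ hm'] using h3
  rw [intervalIntegral.integral_eq_sub_of_hasDerivAt hderiv
    (Continuous.intervalIntegrable (by fun_prop) _ _)]
  simp [cos_two_pi_int m]

lemma T1 (k n : ℕ) (hn : 1 ≤ n) :
    ∫ x in (0:ℝ)..(2*π), Real.cos ((k:ℝ)*x) * Real.cos ((n:ℝ)*x)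
      = if k = n then π else 0 := by
  have hrw : ∀ x : ℝ, Real.cos ((k:ℝ)*x) * Real.cos ((n:ℝ)*x)
      = (Real.cos ((((k:ℤ)-n:ℤ):ℝ)*x) + Real.cos ((((k:ℤ)+n:ℤ):ℝ)*x)) / 2 := by
    intro x
    push_cast
    rw [sub_mul, add_mul, Real.cos_sub, Real.cos_add]
    ring
  rw [intervalIntegral.integral_congr (fun x _ => hrw x)]
  have hadd : ∫ x in (0:ℝ)..(2*π),
      (Real.cos ((((k:ℤ)-n:ℤ):ℝ)*x) + Real.cos ((((k:ℤ)+n:ℤ):ℝ)*x)) / 2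
      = ((∫ x in (0:ℝ)..(2*π), Real.cos ((((k:ℤ)-n:ℤ):ℝ)*x))
        + ∫ x in (0:ℝ)..(2*π), Real.cos ((((k:ℤ)+n:ℤ):ℝ)*x)) / 2 := by
    rw [intervalIntegral.integral_div, intervalIntegral.integral_add]
    · exact Continuous.intervalIntegrable (by fun_prop) _ _
    · exact Continuous.intervalIntegrable (by fun_prop) _ _
  rw [hadd, integral_cos_int ((k:ℤ)+n) (by omega)]
  rcases eq_or_ne k n with rfl | hkn
  · simp [Real.two_pi_pos.ne']
  · rw [integral_cos_int ((k:ℤ)-n) (by omega)]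
    simp [hkn]

lemma T2 (k n : ℕ) :
    ∫ x in (0:ℝ)..(2*π), Real.sin ((k:ℝ)*x) * Real.cos ((n:ℝ)*x) = 0 := by
  have hrw : ∀ x : ℝ, Real.sin ((k:ℝ)*x) * Real.cos ((n:ℝ)*x)
      = (Real.sin ((((k:ℤ)+n:ℤ):ℝ)*x) + Real.sin ((((k:ℤ)-n:ℤ):ℝ)*x)) / 2 := by
    intro x
    push_cast
    rw [sub_mul, add_mul, Real.sin_sub, Real.sin_add]
    ring
  rw [intervalIntegral.integral_congr (fun x _ => hrw x)]
  rw [intervalIntegral.integral_div, intervalIntegral.integral_add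
    (Continuous.intervalIntegrable (by fun_prop) _ _)
    (Continuous.intervalIntegrable (by fun_prop) _ _),
    integral_sin_int, integral_sin_int]
  norm_num

lemma termval (a : ℂ) (n k : ℕ) (hn : 1 ≤ n) (hk : 1 ≤ k)
    (hT1 : ∫ x in (0:ℝ)..(2*π), Real.cos ((k:ℝ)*x) * Real.cos ((n:ℝ)*x)
      = if k = n then π else 0)
    (hT2 : ∫ x in (0:ℝ)..(2*π), Real.sin ((k:ℝ)*x) * Real.cos ((n:ℝ)*x) = 0) :
    ∫ θ in (0:ℝ)..(2*π),
      (-(((a * Complex.exp (-(θ * Complex.I)))^k / k).re) * Real.cos ((n:ℝ)*θ))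
      = if k = n then -(π * ((a^n).re)) / n else 0 := by
  have hptw : ∀ θ : ℝ,
      -(((a * Complex.exp (-(θ * Complex.I)))^k / k).re) * Real.cos ((n:ℝ)*θ)
      = (-(a^k).re/k) * (Real.cos ((k:ℝ)*θ) * Real.cos ((n:ℝ)*θ))
        + (-(a^k).im/k) * (Real.sin ((k:ℝ)*θ) * Real.cos ((n:ℝ)*θ)) := by
    intro θ
    have h1 : (a * Complex.exp (-(θ * Complex.I)))^k
        = a^k * Complex.exp (((-((k:ℝ)*θ) : ℝ) : ℂ) * Complex.I) := by
      rw [mul_pow, ← Complex.exp_nat_mul]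
      congr 1
      push_cast
      ring
    rw [h1]
    have h2 : ((k:ℂ)) = (((k:ℝ):ℂ)) := by push_cast; ring
    rw [h2, Complex.div_ofReal_re, Complex.mul_re]
    rw [Complex.exp_ofReal_mul_I_re, Complex.exp_ofReal_mul_I_im, Real.cos_neg, Real.sin_neg]
    ring
  rw [intervalIntegral.integral_congr (fun θ _ => hptw θ)]
  rw [intervalIntegral.integral_add
      (Continuous.intervalIntegrable (by fun_prop) _ _)
      (Continuous.intervalIntegrable (by fun_prop) _ _),
    intervalIntegral.integral_const_mul, intervalIntegral.integral_const_mul, hT1, hT2]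
  rcases eq_or_ne k n with rfl | hkn
  · simp
    ring
  · simp [hkn]

lemma key_aux (a : ℂ) (ha : ‖a‖ < 1) (n : ℕ) (hn : 1 ≤ n)
    (T1 : ∀ k : ℕ, ∫ x in (0:ℝ)..(2*π), Real.cos ((k:ℝ)*x) * Real.cos ((n:ℝ)*x)
      = if k = n then π else 0)
    (T2 : ∀ k : ℕ, ∫ x in (0:ℝ)..(2*π), Real.sin ((k:ℝ)*x) * Real.cos ((n:ℝ)*x) = 0)
    (termval : ∀ k : ℕ, 1 ≤ k → ∫ θ in (0:ℝ)..(2*π),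
      (-(((a * Complex.exp (-(θ * Complex.I)))^k / k).re) * Real.cos ((n:ℝ)*θ))
      = if k = n then -(π * ((a^n).re)) / n else 0) :
    ∫ θ in (0:ℝ)..(2*π),
      Real.log (‖Complex.exp ((θ:ℂ) * Complex.I) - a‖) * Real.cos ((n:ℝ)*θ)
      = -(π * ((a^n).re)) / n := by
  set F : ℕ → ℝ → ℝ := fun k θ =>
    -(((a * Complex.exp (-(θ * Complex.I)))^k / k).re) * Real.cos ((n:ℝ)*θ) with hF
  -- pointwise HasSum
  have habsw : ∀ θ : ℝ, ‖a * Complex.exp (-(θ * Complex.I))‖ = ‖a‖ := by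
    intro θ
    rw [norm_mul]
    have : -((θ:ℂ) * Complex.I) = ((-θ : ℝ) : ℂ) * Complex.I := by push_cast; ring
    rw [this, Complex.norm_exp_ofReal_mul_I, mul_one]
  have hptsum : ∀ θ : ℝ, HasSum (fun k => F k θ)
      (Real.log (‖Complex.exp ((θ:ℂ) * Complex.I) - a‖) * Real.cos ((n:ℝ)*θ)) := by
    intro θ
    set w : ℂ := a * Complex.exp (-(θ * Complex.I)) with hw
    have hwlt : ‖w‖ < 1 := by
      rw [habsw θ]; exact ha
    have h1 := Complex.hasSum_taylorSeries_neg_log hwlt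
    have h2 := (Complex.hasSum_re h1).neg
    have h3 := h2.mul_right (Real.cos ((n:ℝ)*θ))
    have habseq : ‖1 - w‖ = ‖Complex.exp ((θ:ℂ) * Complex.I) - a‖ := by
      have : Complex.exp ((θ:ℂ) * Complex.I) * (1 - w)
          = Complex.exp ((θ:ℂ) * Complex.I) - a := by
        rw [hw, mul_sub, mul_one, ← mul_assoc, mul_comm _ a, mul_assoc,
          ← Complex.exp_add]
        simp
      rw [← this, norm_mul]
      have h4 : ‖Complex.exp ((θ:ℂ) * Complex.I)‖ = 1 :=
        Complex.norm_exp_ofReal_mul_I θ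
      rw [h4, one_mul]
    have h5 : (-(-Complex.log (1 - w)).re) = Real.log (‖Complex.exp ((θ:ℂ) * Complex.I) - a‖) := by
      rw [Complex.neg_re, neg_neg, Complex.log_re, habseq]
    rw [h5] at h3
    convert h3 using 2
  -- summability of integral norms
  have hFcont : ∀ k : ℕ, Continuous (F k) := by
    intro k
    apply Continuous.mul _ (by fun_prop)
    apply Continuous.neg
    exact Complex.continuous_re.comp (by fun_prop)
  have hFint : ∀ k : ℕ, Integrable (F k) (volume.restrict (Set.Ioc (0:ℝ) (2*π))) := by
    intro k
    exact (hFcont k).integrableOn_Ioc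
  have hFbd : ∀ k : ℕ, ∀ θ : ℝ, ‖F k θ‖ ≤ (‖a‖)^k := by
    intro k θ
    have h6 : ‖F k θ‖ ≤ ‖(a * Complex.exp (-(θ * Complex.I)))^k / k‖ * 1 := by
      rw [hF]
      simp only [norm_mul, norm_neg, Real.norm_eq_abs]
      gcongr
      · exact (Complex.abs_re_le_norm _)
      · exact Real.abs_cos_le_one _
    rw [mul_one] at h6
    refine h6.trans ?_
    rw [norm_div, norm_pow, habsw θ]
    rcases Nat.eq_zero_or_pos k with rfl | hk
    · simp
    · have hk1 : (1:ℝ) ≤ ‖(k:ℂ)‖ := by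
        simp only [Complex.norm_natCast]
        exact_mod_cast hk
      exact div_le_self (by positivity) hk1
  have hnormint : ∀ k : ℕ,
      (∫ θ in Set.Ioc (0:ℝ) (2*π), ‖F k θ‖) ≤ (‖a‖)^k * (2*π) := by
    intro k
    have := MeasureTheory.integral_mono (μ := volume.restrict (Set.Ioc (0:ℝ) (2*π)))
      (hFint k).norm (integrable_const _) (fun θ => hFbd k θ)
    rw [MeasureTheory.setIntegral_const] at this
    refine this.trans ?_
    rw [MeasureTheory.measureReal_def, Real.volume_Ioc, smul_eq_mul, sub_zero,
      ENNReal.toReal_ofReal Real.two_pi_pos.le]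
    linarith
  have hsum : Summable (fun k => ∫ θ in Set.Ioc (0:ℝ) (2*π), ‖F k θ‖) := by
    apply Summable.of_nonneg_of_le
      (fun k => MeasureTheory.integral_nonneg (fun θ => norm_nonneg _)) hnormint
    exact (summable_geometric_of_lt_one (norm_nonneg a) ha).mul_right _
  have hHS := MeasureTheory.hasSum_integral_of_summable_integral_norm hFint hsum
  -- identify the total integral
  have hIoc : ∀ g : ℝ → ℝ, (∫ θ in (0:ℝ)..(2*π), g θ) = ∫ θ in Set.Ioc (0:ℝ) (2*π), g θ := by
    intro g
    rw [intervalIntegral.integral_of_le Real.two_pi_pos.le]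
  have htotal : (∫ θ in Set.Ioc (0:ℝ) (2*π), ∑' k, F k θ)
      = ∫ θ in (0:ℝ)..(2*π),
        Real.log (‖Complex.exp ((θ:ℂ) * Complex.I) - a‖) * Real.cos ((n:ℝ)*θ) := by
    rw [hIoc]
    exact MeasureTheory.integral_congr_ae
      (Filter.Eventually.of_forall fun θ => (hptsum θ).tsum_eq)
  rw [htotal] at hHS
  -- identify terms
  have hterm : ∀ k : ℕ, (∫ θ in Set.Ioc (0:ℝ) (2*π), F k θ)
      = if k = n then -(π * ((a^n).re)) / n else 0 := by
    intro k
    rw [← hIoc]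
    rcases Nat.eq_zero_or_pos k with rfl | hk
    · have : ∀ θ : ℝ, F 0 θ = 0 := by intro θ; simp [hF]
      rw [intervalIntegral.integral_congr (fun θ _ => this θ), if_neg (by omega)]
      simp
    · exact termval k hk
  have hHS2 : HasSum (fun k : ℕ => if k = n then -(π * ((a^n).re)) / n else 0)
      (∫ θ in (0:ℝ)..(2*π),
        Real.log (‖Complex.exp ((θ:ℂ) * Complex.I) - a‖) * Real.cos ((n:ℝ)*θ)) := by
    rw [show (fun k : ℕ => if k = n then -(π * ((a^n).re)) / n else 0) = fun k => ∫ θ in Set.Ioc (0:ℝ) (2*π), F k θ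
      from funext fun k => (hterm k).symm]
    exact hHS
  exact ((hasSum_ite_eq n _).unique hHS2).symm


lemma geo (R₀ ρ₀ ρ ω ω' : ℝ) (hR : 0 < R₀) :
    Real.sqrt ((R₀*Real.cos ω*Real.cosh ρ - R₀*Real.cos ω'*Real.cosh ρ₀)^2
        + (R₀*Real.sin ω*Real.sinh ρ - R₀*Real.sin ω'*Real.sinh ρ₀)^2)
      = (R₀ * Real.exp ρ₀ / 2)
        * ‖Complex.exp ((ω':ℂ)*Complex.I)
            - Complex.exp (((ρ - ρ₀ : ℝ):ℂ) + (ω:ℂ)*Complex.I)‖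
        * ‖Complex.exp ((ω':ℂ)*Complex.I)
            - Complex.exp ((-(ρ + ρ₀ : ℝ) : ℂ) - (ω:ℂ)*Complex.I)‖ := by
  have hz : ∀ r t : ℝ, ((R₀*Real.cos t*Real.cosh r : ℝ):ℂ)
        + ((R₀*Real.sin t*Real.sinh r : ℝ):ℂ)*Complex.I
      = (R₀:ℂ)/2 * (Complex.exp ((r:ℂ) + (t:ℂ)*Complex.I)
          + Complex.exp (-((r:ℂ) + (t:ℂ)*Complex.I))) := by
    intro r t
    have h1 : Complex.exp ((r:ℂ) + (t:ℂ)*Complex.I)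
        = ((Real.exp r : ℝ):ℂ) * (((Real.cos t:ℝ):ℂ) + ((Real.sin t:ℝ):ℂ)*Complex.I) := by
      rw [Complex.exp_add, Complex.exp_mul_I, ← Complex.ofReal_exp, ← Complex.ofReal_cos,
        ← Complex.ofReal_sin]
    have h2 : Complex.exp (-((r:ℂ) + (t:ℂ)*Complex.I))
        = ((Real.exp (-r) : ℝ):ℂ) * (((Real.cos t:ℝ):ℂ) - ((Real.sin t:ℝ):ℂ)*Complex.I) := by
      rw [show -((r:ℂ) + (t:ℂ)*Complex.I) = ((-r:ℝ):ℂ) + ((-t:ℝ):ℂ)*Complex.I by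
          push_cast; ring,
        Complex.exp_add, Complex.exp_mul_I, ← Complex.ofReal_exp, ← Complex.ofReal_cos,
        ← Complex.ofReal_sin, Real.cos_neg, Real.sin_neg]
      push_cast
      ring
    rw [h1, h2, Real.cosh_eq, Real.sinh_eq, Real.exp_neg]
    push_cast
    ring
  have hfac : (R₀:ℂ)/2 * (Complex.exp ((ρ:ℂ) + (ω:ℂ)*Complex.I)
            + Complex.exp (-((ρ:ℂ) + (ω:ℂ)*Complex.I)))
        - (R₀:ℂ)/2 * (Complex.exp ((ρ₀:ℂ) + (ω':ℂ)*Complex.I)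
            + Complex.exp (-((ρ₀:ℂ) + (ω':ℂ)*Complex.I)))
      = -((R₀:ℂ) * Complex.exp (ρ₀:ℂ) / 2)
        * (Complex.exp ((ω':ℂ)*Complex.I)
            - Complex.exp (((ρ - ρ₀ : ℝ):ℂ) + (ω:ℂ)*Complex.I))
        * (Complex.exp ((ω':ℂ)*Complex.I)
            - Complex.exp ((-(ρ + ρ₀ : ℝ) : ℂ) - (ω:ℂ)*Complex.I))
        * Complex.exp (-((ω':ℂ)*Complex.I)) := by
    have e1 : Complex.exp ((ρ:ℂ) + (ω:ℂ)*Complex.I)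
        = Complex.exp (ρ:ℂ) * Complex.exp ((ω:ℂ)*Complex.I) := Complex.exp_add _ _
    have e2 : Complex.exp (-((ρ:ℂ) + (ω:ℂ)*Complex.I))
        = Complex.exp (-(ρ:ℂ)) * Complex.exp (-((ω:ℂ)*Complex.I)) := by
      rw [neg_add, Complex.exp_add]
    have e3 : Complex.exp ((ρ₀:ℂ) + (ω':ℂ)*Complex.I)
        = Complex.exp (ρ₀:ℂ) * Complex.exp ((ω':ℂ)*Complex.I) := Complex.exp_add _ _
    have e4 : Complex.exp (-((ρ₀:ℂ) + (ω':ℂ)*Complex.I))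
        = Complex.exp (-(ρ₀:ℂ)) * Complex.exp (-((ω':ℂ)*Complex.I)) := by
      rw [neg_add, Complex.exp_add]
    have e5 : Complex.exp (((ρ - ρ₀ : ℝ):ℂ) + (ω:ℂ)*Complex.I)
        = Complex.exp (ρ:ℂ) * Complex.exp (-(ρ₀:ℂ)) * Complex.exp ((ω:ℂ)*Complex.I) := by
      rw [show (((ρ - ρ₀ : ℝ):ℂ) + (ω:ℂ)*Complex.I)
          = ((ρ:ℂ) + (-(ρ₀:ℂ))) + (ω:ℂ)*Complex.I by push_cast; ring,
        Complex.exp_add, Complex.exp_add]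
    have e6 : Complex.exp ((-(ρ + ρ₀ : ℝ) : ℂ) - (ω:ℂ)*Complex.I)
        = Complex.exp (-(ρ:ℂ)) * Complex.exp (-(ρ₀:ℂ)) * Complex.exp (-((ω:ℂ)*Complex.I)) := by
      rw [show ((-(ρ + ρ₀ : ℝ) : ℂ) - (ω:ℂ)*Complex.I)
          = ((-(ρ:ℂ)) + (-(ρ₀:ℂ))) + (-((ω:ℂ)*Complex.I)) by push_cast; ring,
        Complex.exp_add, Complex.exp_add]
    rw [e1, e2, e3, e4, e5, e6]
    have hE : Complex.exp (ρ:ℂ) * Complex.exp (-(ρ:ℂ)) = 1 := by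
      rw [← Complex.exp_add]; simp
    have hQ : Complex.exp (ρ₀:ℂ) * Complex.exp (-(ρ₀:ℂ)) = 1 := by
      rw [← Complex.exp_add]; simp
    have hV : Complex.exp ((ω:ℂ)*Complex.I) * Complex.exp (-((ω:ℂ)*Complex.I)) = 1 := by
      rw [← Complex.exp_add]; simp
    have hU : Complex.exp ((ω':ℂ)*Complex.I) * Complex.exp (-((ω':ℂ)*Complex.I)) = 1 := by
      rw [← Complex.exp_add]; simp
    set E := Complex.exp (ρ:ℂ)
    set E' := Complex.exp (-(ρ:ℂ))
    set Q := Complex.exp (ρ₀:ℂ)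
    set Q' := Complex.exp (-(ρ₀:ℂ))
    set V := Complex.exp ((ω:ℂ)*Complex.I)
    set V' := Complex.exp (-((ω:ℂ)*Complex.I))
    set U := Complex.exp ((ω':ℂ)*Complex.I)
    set U' := Complex.exp (-((ω':ℂ)*Complex.I))
    linear_combination ((R₀:ℂ)/2) * ((Q'*U'*E*E'*V*V' - E*V - E'*V') * hQ
      + (Q*U - E*V*Q*Q' - E'*V'*Q*Q') * hU + (Q'*U'*V*V') * hE + (Q'*U') * hV)
  have habs : Real.sqrt ((R₀*Real.cos ω*Real.cosh ρ - R₀*Real.cos ω'*Real.cosh ρ₀)^2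
        + (R₀*Real.sin ω*Real.sinh ρ - R₀*Real.sin ω'*Real.sinh ρ₀)^2)
      = ‖(((R₀*Real.cos ω*Real.cosh ρ : ℝ):ℂ)
          + ((R₀*Real.sin ω*Real.sinh ρ : ℝ):ℂ)*Complex.I)
        - (((R₀*Real.cos ω'*Real.cosh ρ₀ : ℝ):ℂ)
          + ((R₀*Real.sin ω'*Real.sinh ρ₀ : ℝ):ℂ)*Complex.I)‖ := by
    rw [Complex.norm_def, Complex.normSq_apply]
    congr 1
    simp only [Complex.sub_re, Complex.add_re, Complex.mul_re, Complex.I_re, Complex.I_im,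
      Complex.ofReal_re, Complex.ofReal_im, Complex.sub_im, Complex.add_im, Complex.mul_im]
    ring
  rw [habs, hz, hz, hfac]
  rw [norm_mul, norm_mul, norm_mul, norm_neg]
  have hU1 : ‖Complex.exp (-((ω':ℂ)*Complex.I))‖ = 1 := by
    rw [show -((ω':ℂ)*Complex.I) = ((-ω' : ℝ):ℂ)*Complex.I by push_cast; ring]
    exact Complex.norm_exp_ofReal_mul_I _
  rw [hU1, mul_one, norm_div, norm_mul]
  have hQ1 : ‖Complex.exp (ρ₀:ℂ)‖ = Real.exp ρ₀ := by
    rw [Complex.norm_exp]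
    simp
  rw [hQ1]
  have : ‖(R₀:ℂ)‖ = R₀ := by
    rw [Complex.norm_real, Real.norm_eq_abs, abs_of_pos hR]
  rw [this]
  have : ‖(2:ℂ)‖ = 2 := by norm_num
  rw [this]


lemma key (a : ℂ) (ha : ‖a‖ < 1) (n : ℕ) (hn : 1 ≤ n) :
    ∫ θ in (0:ℝ)..(2*π),
      Real.log (‖Complex.exp ((θ:ℂ) * Complex.I) - a‖) * Real.cos ((n:ℝ)*θ)
      = -(π * ((a^n).re)) / n :=
  key_aux a ha n hn (fun k => T1 k n hn) (fun k => T2 k n)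
    (fun k hk => termval a n k hn hk (T1 k n hn) (T2 k n))

/-- For n ≥ 1 and a point y with elliptic coordinates (ρ, ω),
0 < ρ < ρ₀ (inside the ellipse),
(1/2π) ∫₀^{2π} ln|y − x(ω′)| cos(nω′) dω′
  = −((e^{nρ} + e^{−nρ})/(2n e^{nρ₀})) cos(nω). -/
theorem singleLayer_ellipse_cos_inside (R₀ ρ₀ : ℝ) (hR : 0 < R₀) (hρ₀ : 0 < ρ₀)
    (n : ℕ) (hn : 1 ≤ n)
    (ρ ω : ℝ) (hρ : 0 < ρ) (hρlt : ρ < ρ₀) (hω : ω ∈ Set.Ico (0 : ℝ) (2 * Real.pi))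
    (y₁ y₂ : ℝ)
    (hy₁ : y₁ = R₀ * Real.cos ω * Real.cosh ρ)
    (hy₂ : y₂ = R₀ * Real.sin ω * Real.sinh ρ) :
    (1 / (2 * Real.pi)) *
        ∫ ω' in (0 : ℝ)..(2 * Real.pi),
          Real.log (Real.sqrt ((y₁ - R₀ * Real.cos ω' * Real.cosh ρ₀) ^ 2 +
            (y₂ - R₀ * Real.sin ω' * Real.sinh ρ₀) ^ 2)) * Real.cos ((n : ℝ) * ω')
      = -((Real.exp ((n : ℝ) * ρ) + Real.exp (-((n : ℝ) * ρ))) /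
            (2 * (n : ℝ) * Real.exp ((n : ℝ) * ρ₀))) * Real.cos ((n : ℝ) * ω) := by
  subst hy₁ hy₂
  set A : ℂ := Complex.exp (((ρ - ρ₀ : ℝ):ℂ) + (ω:ℂ)*Complex.I) with hA
  set B : ℂ := Complex.exp ((-(ρ + ρ₀ : ℝ) : ℂ) - (ω:ℂ)*Complex.I) with hB
  have hAabs : ‖A‖ = Real.exp (ρ - ρ₀) := by
    rw [hA, Complex.norm_exp]
    congr 1
    simp
  have hBabs : ‖B‖ = Real.exp (-(ρ + ρ₀)) := by
    rw [hB, Complex.norm_exp]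
    congr 1
    simp
  have hA1 : ‖A‖ < 1 := by
    rw [hAabs]
    exact Real.exp_lt_one_iff.mpr (by linarith)
  have hB1 : ‖B‖ < 1 := by
    rw [hBabs]
    exact Real.exp_lt_one_iff.mpr (by linarith)
  have hneA : ∀ t : ℝ, ‖Complex.exp ((t:ℂ)*Complex.I) - A‖ ≠ 0 := by
    intro t h
    rw [norm_eq_zero, sub_eq_zero] at h
    have h1 := Complex.norm_exp_ofReal_mul_I t
    rw [h] at h1
    rw [h1] at hA1
    exact lt_irrefl 1 hA1
  have hneB : ∀ t : ℝ, ‖Complex.exp ((t:ℂ)*Complex.I) - B‖ ≠ 0 := by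
    intro t h
    rw [norm_eq_zero, sub_eq_zero] at h
    have h1 := Complex.norm_exp_ofReal_mul_I t
    rw [h] at h1
    rw [h1] at hB1
    exact lt_irrefl 1 hB1
  have hC0 : (0:ℝ) < R₀ * Real.exp ρ₀ / 2 := by positivity
  -- pointwise rewriting of the integrand
  have hptw : ∀ t : ℝ,
      Real.log (Real.sqrt ((R₀ * Real.cos ω * Real.cosh ρ - R₀ * Real.cos t * Real.cosh ρ₀) ^ 2 +
            (R₀ * Real.sin ω * Real.sinh ρ - R₀ * Real.sin t * Real.sinh ρ₀) ^ 2))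
          * Real.cos ((n : ℝ) * t)
        = Real.log (R₀ * Real.exp ρ₀ / 2) * Real.cos ((n : ℝ) * t)
          + (Real.log (‖Complex.exp ((t:ℂ)*Complex.I) - A‖) * Real.cos ((n : ℝ) * t)
            + Real.log (‖Complex.exp ((t:ℂ)*Complex.I) - B‖) * Real.cos ((n : ℝ) * t)) := by
    intro t
    rw [geo R₀ ρ₀ ρ ω t hR, Real.log_mul (mul_ne_zero hC0.ne' (hneA t)) (hneB t),
      Real.log_mul hC0.ne' (hneA t)]
    ring
  rw [intervalIntegral.integral_congr (fun t _ => hptw t)]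
  have hcontA : Continuous (fun t : ℝ =>
      Real.log (‖Complex.exp ((t:ℂ)*Complex.I) - A‖) * Real.cos ((n : ℝ) * t)) := by
    exact (Continuous.log (continuous_norm.comp (by fun_prop)) hneA).mul (by fun_prop)
  have hcontB : Continuous (fun t : ℝ =>
      Real.log (‖Complex.exp ((t:ℂ)*Complex.I) - B‖) * Real.cos ((n : ℝ) * t)) := by
    exact (Continuous.log (continuous_norm.comp (by fun_prop)) hneB).mul (by fun_prop)
  rw [intervalIntegral.integral_add (g := fun t : ℝ =>
        Real.log (‖Complex.exp ((t:ℂ)*Complex.I) - A‖) * Real.cos ((n : ℝ) * t)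
        + Real.log (‖Complex.exp ((t:ℂ)*Complex.I) - B‖) * Real.cos ((n : ℝ) * t))
      (Continuous.intervalIntegrable (by fun_prop) _ _)
      ((hcontA.add hcontB).intervalIntegrable _ _),
    intervalIntegral.integral_add (hcontA.intervalIntegrable _ _)
      (hcontB.intervalIntegrable _ _)]
  have hzero : ∫ t in (0:ℝ)..(2*π), Real.log (R₀ * Real.exp ρ₀ / 2) * Real.cos ((n : ℝ) * t)
      = 0 := by
    rw [intervalIntegral.integral_const_mul]
    have := integral_cos_int (n:ℤ) (by omega)
    push_cast at this
    rw [this, mul_zero]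
  rw [hzero, key A hA1 n hn, key B hB1 n hn]
  have hAn : ((A^n).re) = Real.exp ((n:ℝ)*(ρ - ρ₀)) * Real.cos ((n:ℝ)*ω) := by
    rw [hA, ← Complex.exp_nat_mul, Complex.exp_re]
    congr 2 <;>
      simp [Complex.mul_re, Complex.mul_im, Complex.add_re, Complex.add_im]
  have hBn : ((B^n).re) = Real.exp ((n:ℝ)*(-(ρ + ρ₀))) * Real.cos ((n:ℝ)*ω) := by
    rw [hB, ← Complex.exp_nat_mul, Complex.exp_re]
    have : (((n:ℂ) * ((-(ρ + ρ₀ : ℝ) : ℂ) - (ω:ℂ)*Complex.I)).im) = -((n:ℝ)*ω) := by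
      simp [Complex.mul_im, Complex.sub_im, Complex.sub_re]
    rw [this, Real.cos_neg]
    congr 2
    simp [Complex.mul_re, Complex.sub_re, Complex.sub_im]
  rw [hAn, hBn]
  have hexp1 : Real.exp ((n:ℝ)*(ρ - ρ₀)) = Real.exp ((n:ℝ)*ρ) / Real.exp ((n:ℝ)*ρ₀) := by
    rw [← Real.exp_sub]
    congr 1
    ring
  have hexp2 : Real.exp ((n:ℝ)*(-(ρ + ρ₀))) = Real.exp (-((n:ℝ)*ρ)) / Real.exp ((n:ℝ)*ρ₀) := by
    rw [← Real.exp_sub]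
    congr 1
    ring
  rw [hexp1, hexp2]
  have hπ : (π:ℝ) ≠ 0 := Real.pi_ne_zero
  have hnn : ((n:ℝ)) ≠ 0 := by positivity
  have hE : Real.exp ((n:ℝ)*ρ₀) ≠ 0 := (Real.exp_pos _).ne'
  field_simp
  ring
end

section
/- Let n ≥ 1 be an integer and let y ∈ ℝ² have elliptic coordinates (ρ, ω) with ρ > ρ₀ (y outside the ellipse). Then (1/2π) ∫₀^{2π} ln|y − x(ω′)| · cos(nω′) dω′ = −((e^{nρ₀} + e^{−nρ₀}) / (2n e^{nρ})) · cos(nω). That is, the single-layer potential of the density φ_{1,n}(ω′) = cos(nω′)/Ξ(ω′) with respect to arc length equals −((e^{nρ₀} + e^{−nρ₀})/(2n e^{nρ})) cos(nω) outside the ellipse. -/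
open Real MeasureTheory intervalIntegral Complex

private lemma int_cos_lin (m : ℤ) (hm : m ≠ 0) (c : ℝ) :
    ∫ x in (0:ℝ)..(2*Real.pi), Real.cos ((m:ℝ) * x + c) = 0 := by
  have hm' : (m:ℝ) ≠ 0 := Int.cast_ne_zero.mpr hm
  rw [intervalIntegral.integral_comp_mul_add Real.cos hm' c, integral_cos]
  have h1 : Real.sin ((m:ℝ) * (2*Real.pi) + c) = Real.sin ((m:ℝ) * 0 + c) := by
    rw [mul_zero, zero_add]
    have := Real.sin_add_int_mul_two_pi c m
    rw [← this]; ring_nf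
  rw [h1]; simp

private lemma cos_orth (k n : ℕ) (hn : 1 ≤ n) (θ : ℝ) :
    ∫ x in (0:ℝ)..(2*Real.pi), Real.cos ((k:ℝ)*x + θ) * Real.cos ((n:ℝ)*x)
      = if k = n then Real.pi * Real.cos θ else 0 := by
  have prod : ∀ A B : ℝ, Real.cos A * Real.cos B = (Real.cos (A+B) + Real.cos (A-B))/2 := by
    intro A B; rw [Real.cos_add, Real.cos_sub]; ring
  have hpt : ∀ x : ℝ, Real.cos ((k:ℝ)*x + θ) * Real.cos ((n:ℝ)*x)
      = (Real.cos ((((k:ℤ)+n : ℤ):ℝ)*x + θ) + Real.cos ((((k:ℤ)-n : ℤ):ℝ)*x + θ))/2 := by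
    intro x
    rw [prod ((k:ℝ)*x + θ) ((n:ℝ)*x)]
    push_cast
    ring_nf
  have hint : ∀ m : ℤ, ∀ c : ℝ, IntervalIntegrable (fun x => Real.cos ((m:ℝ)*x + c))
      MeasureTheory.volume 0 (2*Real.pi) := by
    intro m c
    exact (Real.continuous_cos.comp (by continuity)).intervalIntegrable _ _
  rw [intervalIntegral.integral_congr (fun x _ => hpt x)]
  rw [intervalIntegral.integral_div, intervalIntegral.integral_add (hint _ _) (hint _ _)]
  rw [int_cos_lin ((k:ℤ)+n) (by omega) θ]
  by_cases hkn : k = n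
  · subst hkn
    have h0 : ∫ x in (0:ℝ)..(2*Real.pi), Real.cos ((((k:ℤ)-k : ℤ):ℝ)*x + θ)
        = 2*Real.pi*Real.cos θ := by simp
    rw [h0, if_pos rfl]; ring
  · rw [int_cos_lin ((k:ℤ)-n) (by omega) θ, if_neg hkn]
    norm_num

private lemma hasSum_log_re (a b : ℝ) (ha : a < 0) :
    HasSum (fun k : ℕ => Real.exp ((k:ℝ)*a) * Real.cos ((k:ℝ)*b) / k)
      (-(Complex.log (1 - Complex.exp ((a:ℂ) + (b:ℂ)*Complex.I))).re) := by
  set z : ℂ := Complex.exp ((a:ℂ) + (b:ℂ)*Complex.I) with hz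
  have hnorm : ‖z‖ < 1 := by
    rw [hz, Complex.norm_exp]
    simp only [Complex.add_re, Complex.ofReal_re, Complex.mul_re, Complex.ofReal_im,
      Complex.I_re, Complex.I_im]
    simpa using Real.exp_lt_one_iff.mpr (by simpa using ha)
  have h := Complex.hasSum_taylorSeries_neg_log hnorm
  have h2 := Complex.hasSum_re h
  rw [Complex.neg_re] at h2
  convert h2 using 2 with k
  have hzk : z ^ k = Complex.exp (((k:ℝ)*a : ℝ) + ((k:ℝ)*b : ℝ)*Complex.I) := by
    rw [hz, ← Complex.exp_nat_mul]
    congr 1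
    push_cast
    ring
  rw [show ((k:ℕ):ℂ) = (((k:ℕ):ℝ):ℂ) by push_cast; ring, Complex.div_ofReal_re, hzk,
    Complex.exp_re]
  simp

private lemma log_dist (R₀ ρ₀ ρ ω t : ℝ) (hR : 0 < R₀) (h0 : 0 < ρ₀) (hlt : ρ₀ < ρ) :
    Real.log (Real.sqrt ((R₀*Real.cos ω*Real.cosh ρ - R₀*Real.cos t*Real.cosh ρ₀)^2 +
        (R₀*Real.sin ω*Real.sinh ρ - R₀*Real.sin t*Real.sinh ρ₀)^2))
    = (Real.log (R₀/2) + ρ)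
      + (Complex.log (1 - Complex.exp (((ρ₀-ρ:ℝ):ℂ) + ((t-ω:ℝ):ℂ)*Complex.I))).re
      + (Complex.log (1 - Complex.exp (((-(ρ+ρ₀):ℝ):ℂ) + ((-(t+ω):ℝ):ℂ)*Complex.I))).re := by
  set u : ℂ := Complex.exp (((ρ₀-ρ:ℝ):ℂ) + ((t-ω:ℝ):ℂ)*Complex.I) with hu
  set v : ℂ := Complex.exp (((-(ρ+ρ₀):ℝ):ℂ) + ((-(t+ω):ℝ):ℂ)*Complex.I) with hv
  set ζ : ℂ := (ρ:ℂ) + (ω:ℂ)*Complex.I with hζ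
  set ζ' : ℂ := (ρ₀:ℂ) + (t:ℂ)*Complex.I with hζ'
  set z : ℂ := ((R₀:ℂ)/2) * Complex.exp ζ * (1 - u) * (1 - v) with hzdef
  have hnu : ‖u‖ < 1 := by
    rw [hu, Complex.norm_exp, show (((ρ₀-ρ:ℝ):ℂ) + ((t-ω:ℝ):ℂ)*Complex.I).re = ρ₀ - ρ by simp]
    exact Real.exp_lt_one_iff.mpr (by linarith)
  have hnv : ‖v‖ < 1 := by
    rw [hv, Complex.norm_exp, show (((-(ρ+ρ₀):ℝ):ℂ) + ((-(t+ω):ℝ):ℂ)*Complex.I).re = -(ρ+ρ₀) by simp]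
    exact Real.exp_lt_one_iff.mpr (by linarith)
  have h1u : (1:ℂ) - u ≠ 0 := by
    intro h
    have : u = 1 := by linear_combination -h
    rw [this] at hnu; simp at hnu
  have h1v : (1:ℂ) - v ≠ 0 := by
    intro h
    have : v = 1 := by linear_combination -h
    rw [this] at hnv; simp at hnv
  -- factorization
  have hfact : z = ((R₀:ℂ)/2) * (Complex.exp ζ + Complex.exp (-ζ)
      - Complex.exp ζ' - Complex.exp (-ζ')) := by
    have e1 : u = Complex.exp ζ' * (Complex.exp ζ)⁻¹ := by
      rw [← Complex.exp_neg, ← Complex.exp_add, hu]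
      congr 1
      rw [hζ, hζ']
      push_cast
      ring
    have e2 : v = (Complex.exp ζ)⁻¹ * (Complex.exp ζ')⁻¹ := by
      rw [← Complex.exp_neg, ← Complex.exp_neg, ← Complex.exp_add, hv]
      congr 1
      rw [hζ, hζ']
      push_cast
      ring
    rw [hzdef, e1, e2, Complex.exp_neg, Complex.exp_neg]
    field_simp
    ring
  -- real and imaginary parts
  have hre : z.re = R₀*Real.cos ω*Real.cosh ρ - R₀*Real.cos t*Real.cosh ρ₀ := by
    rw [hfact, hζ, hζ']
    simp [Complex.exp_re, Complex.exp_im, Real.cosh_eq]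
    ring
  have him : z.im = R₀*Real.sin ω*Real.sinh ρ - R₀*Real.sin t*Real.sinh ρ₀ := by
    rw [hfact, hζ, hζ']
    simp [Complex.exp_re, Complex.exp_im, Real.sinh_eq]
    ring
  have hsqrt : Real.sqrt ((R₀*Real.cos ω*Real.cosh ρ - R₀*Real.cos t*Real.cosh ρ₀)^2 +
      (R₀*Real.sin ω*Real.sinh ρ - R₀*Real.sin t*Real.sinh ρ₀)^2) = ‖z‖ := by
    rw [← hre, ← him, Complex.norm_def, Complex.normSq_apply]
    ring_nf
  rw [hsqrt, hzdef]
  rw [norm_mul, norm_mul, norm_mul]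
  have hR2 : ‖((R₀:ℂ)/2)‖ = R₀/2 := by
    rw [norm_div, Complex.norm_real, Real.norm_eq_abs, abs_of_pos hR]
    simp
  have habsζ : ‖Complex.exp ζ‖ = Real.exp ρ := by
    rw [Complex.norm_exp, hζ]
    simp
  rw [hR2, habsζ]
  have hu0 : ‖1 - u‖ ≠ 0 := by simp only [ne_eq, norm_eq_zero]; exact h1u
  have hv0 : ‖1 - v‖ ≠ 0 := by simp only [ne_eq, norm_eq_zero]; exact h1v
  rw [Real.log_mul (by positivity) hv0, Real.log_mul (by positivity) hu0,
    Real.log_mul (by positivity) (Real.exp_ne_zero ρ), Real.log_exp,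
    ← Complex.log_re, ← Complex.log_re]

/-- For n ≥ 1 and a point y with elliptic coordinates (ρ, ω),
ρ > ρ₀ (outside the ellipse),
(1/2π) ∫₀^{2π} ln|y − x(ω′)| cos(nω′) dω′
  = −((e^{nρ₀} + e^{−nρ₀})/(2n e^{nρ})) cos(nω). -/
theorem singleLayer_ellipse_cos_outside (R₀ ρ₀ : ℝ) (hR : 0 < R₀) (hρ₀ : 0 < ρ₀)
    (n : ℕ) (hn : 1 ≤ n)
    (ρ ω : ℝ) (hρgt : ρ₀ < ρ) (hω : ω ∈ Set.Ico (0 : ℝ) (2 * Real.pi))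
    (y₁ y₂ : ℝ)
    (hy₁ : y₁ = R₀ * Real.cos ω * Real.cosh ρ)
    (hy₂ : y₂ = R₀ * Real.sin ω * Real.sinh ρ) :
    (1 / (2 * Real.pi)) *
        ∫ ω' in (0 : ℝ)..(2 * Real.pi),
          Real.log (Real.sqrt ((y₁ - R₀ * Real.cos ω' * Real.cosh ρ₀) ^ 2 +
            (y₂ - R₀ * Real.sin ω' * Real.sinh ρ₀) ^ 2)) * Real.cos ((n : ℝ) * ω')
      = -((Real.exp ((n : ℝ) * ρ₀) + Real.exp (-((n : ℝ) * ρ₀))) /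
            (2 * (n : ℝ) * Real.exp ((n : ℝ) * ρ))) * Real.cos ((n : ℝ) * ω) := by
  subst hy₁ hy₂
  set C : ℝ := Real.log (R₀/2) + ρ with hC
  -- the k-th term of the series expansion of the integrand
  set G : ℕ → ℝ → ℝ := fun k t =>
    (if k = 0 then C else 0) * Real.cos ((n:ℝ)*t)
      - (Real.exp ((k:ℝ)*(ρ₀-ρ)) * Real.cos ((k:ℝ)*(t-ω)) / k
         + Real.exp ((k:ℝ)*(-(ρ+ρ₀))) * Real.cos ((k:ℝ)*(-(t+ω))) / k) * Real.cos ((n:ℝ)*t)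
    with hG
  -- pointwise expansion of the integrand
  have hHS : ∀ t : ℝ, HasSum (fun k => G k t)
      (Real.log (Real.sqrt ((R₀*Real.cos ω*Real.cosh ρ - R₀ * Real.cos t * Real.cosh ρ₀) ^ 2 +
        (R₀*Real.sin ω*Real.sinh ρ - R₀ * Real.sin t * Real.sinh ρ₀) ^ 2)) * Real.cos ((n:ℝ)*t)) := by
    intro t
    have h1 := (hasSum_log_re (ρ₀-ρ) (t-ω) (by linarith)).add
      (hasSum_log_re (-(ρ+ρ₀)) (-(t+ω)) (by linarith))
    have h2 := ((hasSum_ite_eq 0 (C * Real.cos ((n:ℝ)*t))).sub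
      (h1.mul_right (Real.cos ((n:ℝ)*t))))
    have heq : ∀ k : ℕ, (if k = 0 then C * Real.cos ((n:ℝ)*t) else 0)
        - (Real.exp ((k:ℝ)*(ρ₀-ρ)) * Real.cos ((k:ℝ)*(t-ω)) / k
           + Real.exp ((k:ℝ)*(-(ρ+ρ₀))) * Real.cos ((k:ℝ)*(-(t+ω))) / k) * Real.cos ((n:ℝ)*t)
        = G k t := by
      intro k
      rw [hG]
      by_cases hk : k = 0 <;> simp [hk]
    rw [funext heq] at h2
    convert h2 using 1
    · rfl
    rw [log_dist R₀ ρ₀ ρ ω t hR hρ₀ hρgt]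
    ring
  -- integrability of each term
  have hcont : ∀ k, Continuous (G k) := by
    intro k
    apply Continuous.sub
    · exact continuous_const.mul (Real.continuous_cos.comp (continuous_const.mul continuous_id))
    · apply Continuous.mul _ (Real.continuous_cos.comp (continuous_const.mul continuous_id))
      apply Continuous.add
      · apply Continuous.div_const
        exact continuous_const.mul (Real.continuous_cos.comp (by continuity))
      · apply Continuous.div_const
        exact continuous_const.mul (Real.continuous_cos.comp (by continuity))
  have hInt : ∀ k : ℕ, Integrable (G k) (volume.restrict (Set.Ioc (0:ℝ) (2*Real.pi))) := by
    intro k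
    exact (hcont k).integrableOn_Ioc.integrable
  -- uniform bounds
  set r : ℝ := Real.exp (ρ₀ - ρ) with hr
  have hr0 : 0 ≤ r := Real.exp_nonneg _
  have hr1 : r < 1 := Real.exp_lt_one_iff.mpr (by linarith)
  have hbound : ∀ k : ℕ, ∀ t : ℝ, ‖G k t‖ ≤ (if k = 0 then |C| else 0) + 2 * r ^ k := by
    intro k t
    have hcos : ∀ x : ℝ, |Real.cos x| ≤ 1 := fun x => Real.abs_cos_le_one x
    rcases Nat.eq_zero_or_pos k with hk | hk
    · subst hk
      have hG0 : G 0 t = C * Real.cos ((n:ℝ)*t) := by simp [hG]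
      rw [hG0, if_pos rfl, pow_zero, Real.norm_eq_abs, abs_mul]
      nlinarith [abs_nonneg C, Real.abs_cos_le_one ((n:ℝ)*t), abs_nonneg (Real.cos ((n:ℝ)*t))]
    · have hkne : k ≠ 0 := by omega
      rw [hG]
      simp only [if_neg hkne, zero_mul, zero_sub, norm_neg, norm_mul, Real.norm_eq_abs]
      have hk1 : (1:ℝ) ≤ (k:ℝ) := by exact_mod_cast hk
      have hterm : ∀ a b : ℝ, a ≤ 0 → |Real.exp ((k:ℝ)*a) * Real.cos b / (k:ℝ)| ≤ Real.exp a ^ k := by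
        intro a b ha
        rw [abs_div, abs_mul, abs_of_pos (Real.exp_pos _), abs_of_pos (by positivity : (0:ℝ) < (k:ℝ))]
        calc Real.exp ((k:ℝ)*a) * |Real.cos b| / (k:ℝ)
            ≤ Real.exp ((k:ℝ)*a) * 1 / 1 := by
              gcongr <;> first | exact hcos b | exact hk1
          _ = Real.exp a ^ k := by rw [mul_one, div_one, ← Real.exp_nat_mul]
      calc |Real.exp ((k:ℝ)*(ρ₀-ρ)) * Real.cos ((k:ℝ)*(t-ω)) / k
            + Real.exp ((k:ℝ)*(-(ρ+ρ₀))) * Real.cos ((k:ℝ)*(-(t+ω))) / k| * |Real.cos ((n:ℝ)*t)|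
          ≤ (Real.exp (ρ₀-ρ) ^ k + Real.exp (-(ρ+ρ₀)) ^ k) * 1 := by
            gcongr
            · refine (abs_add_le _ _).trans (add_le_add ?_ ?_)
              · exact hterm _ _ (by linarith)
              · exact hterm _ _ (by linarith)
            · exact hcos _
        _ ≤ 0 + 2 * r ^ k := by
            rw [mul_one, zero_add, hr, two_mul]
            have : Real.exp (-(ρ+ρ₀)) ≤ Real.exp (ρ₀-ρ) := Real.exp_le_exp.mpr (by linarith)
            gcongr <;> first | exact Real.exp_nonneg _ | skip
  have h2π : (0:ℝ) ≤ 2*Real.pi := by positivity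
  -- summability of integrals of norms
  have hSumNorm : Summable (fun k : ℕ => ∫ t in Set.Ioc (0:ℝ) (2*Real.pi), ‖G k t‖) := by
    have hle : ∀ k : ℕ, (∫ t in Set.Ioc (0:ℝ) (2*Real.pi), ‖G k t‖)
        ≤ ((if k = 0 then |C| else 0) + 2*r^k) * (2*Real.pi) := by
      intro k
      have hmono := MeasureTheory.integral_mono_of_nonneg
        (μ := MeasureTheory.volume.restrict (Set.Ioc (0:ℝ) (2*Real.pi)))
        (f := fun t => ‖G k t‖) (g := fun _ => (if k = 0 then |C| else 0) + 2*r^k)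
        (Filter.Eventually.of_forall fun t => norm_nonneg _)
        (MeasureTheory.integrable_const _)
        (Filter.Eventually.of_forall fun t => hbound k t)
      refine hmono.trans ?_
      rw [MeasureTheory.integral_const]
      simp only [MeasureTheory.Measure.restrict_apply, MeasurableSet.univ, Set.univ_inter,
        Real.volume_Ioc, smul_eq_mul]
      rw [measureReal_def, Measure.restrict_apply_univ, Real.volume_Ioc, ENNReal.toReal_ofReal (by linarith)]
      rw [mul_comm]
      gcongr
      · rcases le_or_gt ((if k = 0 then |C| else 0) + 2*r^k) 0 with h | h
        · nlinarith [Real.pi_pos]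
        · nlinarith [Real.pi_pos]
    have hs1 : Summable (fun k : ℕ => ((if k = 0 then |C| else 0) + 2*r^k) * (2*Real.pi)) := by
      apply Summable.mul_right
      exact (hasSum_ite_eq 0 |C|).summable.add ((summable_geometric_of_lt_one hr0 hr1).mul_left 2)
    exact Summable.of_nonneg_of_le (fun k => MeasureTheory.integral_nonneg fun t => norm_nonneg _)
      hle hs1
  -- rewrite the integral as an integral of a tsum, then swap
  have hIoc : (∫ ω' in (0:ℝ)..(2*Real.pi),
        Real.log (Real.sqrt ((R₀*Real.cos ω*Real.cosh ρ - R₀ * Real.cos ω' * Real.cosh ρ₀) ^ 2 +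
          (R₀*Real.sin ω*Real.sinh ρ - R₀ * Real.sin ω' * Real.sinh ρ₀) ^ 2)) * Real.cos ((n:ℝ)*ω'))
      = ∫ t in Set.Ioc (0:ℝ) (2*Real.pi), ∑' k, G k t := by
    rw [intervalIntegral.integral_of_le h2π]
    refine MeasureTheory.integral_congr_ae (Filter.Eventually.of_forall fun t => ?_)
    exact ((hHS t).tsum_eq).symm
  rw [hIoc, ← MeasureTheory.integral_tsum_of_summable_integral_norm hInt hSumNorm]
  -- compute each term integral
  have hnZ : ((n:ℤ)) ≠ 0 := by omega
  have hIk : ∀ k : ℕ, (∫ t in Set.Ioc (0:ℝ) (2*Real.pi), G k t)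
      = if k = n then
          -(Real.pi * ((Real.exp ((n:ℝ)*(ρ₀-ρ)) + Real.exp ((n:ℝ)*(-(ρ+ρ₀))))/n)
            * Real.cos ((n:ℝ)*ω)) else 0 := by
    intro k
    rw [← intervalIntegral.integral_of_le h2π]
    by_cases hk0 : k = 0
    · subst hk0
      have hpt : Set.EqOn (G 0) (fun t => C * Real.cos (((n:ℤ):ℝ) * t + 0))
          (Set.uIcc (0:ℝ) (2*Real.pi)) := by
        intro t _
        simp [hG]
      rw [intervalIntegral.integral_congr hpt, intervalIntegral.integral_const_mul,
        int_cos_lin (n:ℤ) hnZ 0]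
      rw [if_neg (by omega)]
      ring
    · have hpt : Set.EqOn (G k) (fun t =>
          (Real.exp ((k:ℝ)*(ρ₀-ρ))/k) * -(Real.cos ((k:ℝ)*t + (-((k:ℝ)*ω))) * Real.cos ((n:ℝ)*t))
          + (Real.exp ((k:ℝ)*(-(ρ+ρ₀)))/k) * -(Real.cos ((k:ℝ)*t + ((k:ℝ)*ω)) * Real.cos ((n:ℝ)*t)))
          (Set.uIcc (0:ℝ) (2*Real.pi)) := by
        intro t _
        rw [hG]
        simp only [if_neg hk0, zero_mul, zero_sub]
        have c1 : Real.cos ((k:ℝ)*(t-ω)) = Real.cos ((k:ℝ)*t + (-((k:ℝ)*ω))) := by ring_nf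
        have c2 : Real.cos ((k:ℝ)*(-(t+ω))) = Real.cos ((k:ℝ)*t + ((k:ℝ)*ω)) := by
          rw [show (k:ℝ)*(-(t+ω)) = -((k:ℝ)*t + (k:ℝ)*ω) by ring, Real.cos_neg]
        rw [c1, c2]
        ring
      have hii : ∀ c d : ℝ, IntervalIntegrable
          (fun t => d * -(Real.cos ((k:ℝ)*t + c) * Real.cos ((n:ℝ)*t)))
          MeasureTheory.volume 0 (2*Real.pi) := by
        intro c d
        exact (continuous_const.mul (((Real.continuous_cos.comp
          ((continuous_const.mul continuous_id).add continuous_const)).mul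
          (Real.continuous_cos.comp (continuous_const.mul continuous_id))).neg)).intervalIntegrable _ _
      rw [intervalIntegral.integral_congr hpt,
        intervalIntegral.integral_add (hii _ _) (hii _ _),
        intervalIntegral.integral_const_mul, intervalIntegral.integral_const_mul,
        intervalIntegral.integral_neg, intervalIntegral.integral_neg,
        cos_orth k n hn _, cos_orth k n hn _]
      by_cases hkn : k = n
      · subst hkn
        rw [if_pos rfl, if_pos rfl, if_pos rfl, Real.cos_neg]
        ring
      · rw [if_neg hkn, if_neg hkn, if_neg hkn]
        ring
  rw [show (fun k : ℕ => ∫ t in Set.Ioc (0:ℝ) (2*Real.pi), G k t)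
      = (fun k : ℕ => if k = n then
          -(Real.pi * ((Real.exp ((n:ℝ)*(ρ₀-ρ)) + Real.exp ((n:ℝ)*(-(ρ+ρ₀))))/n)
            * Real.cos ((n:ℝ)*ω)) else 0) from funext hIk,
    tsum_ite_eq]
  -- final arithmetic
  have hn0 : (n:ℝ) ≠ 0 := by exact_mod_cast (by omega : n ≠ 0)
  have e1 : Real.exp ((n:ℝ)*(ρ₀-ρ)) = Real.exp ((n:ℝ)*ρ₀) / Real.exp ((n:ℝ)*ρ) := by
    rw [← Real.exp_sub]
    congr 1
    ring
  have e2 : Real.exp ((n:ℝ)*(-(ρ+ρ₀))) = Real.exp (-((n:ℝ)*ρ₀)) / Real.exp ((n:ℝ)*ρ) := by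
    rw [← Real.exp_sub]
    congr 1
    ring
  rw [e1, e2]
  have hexp : Real.exp ((n:ℝ)*ρ) ≠ 0 := Real.exp_ne_zero _
  field_simp
end

section
/- For every integer n ≥ 1, the conormal derivative dφ_{2,n}(ω) = (d/dω)(sin(nω)/Ξ(ω)) / Ξ(ω) of the Neumann–Poincaré eigenfunction φ_{2,n}(ω) = sin(nω)/Ξ(ω) attains its maximum absolute value over [0, 2π) at ω = 0 and ω = π (the two high-curvature points of the ellipse), with |dφ_{2,n}(0)| = |dφ_{2,n}(π)| = n/(R₀² sinh² ρ₀). Moreover, for fixed R₀ and n this maximum value tends to +∞ as ρ₀ → 0⁺, i.e. as the maximal curvature κ_max = cosh ρ₀/(R₀ sinh² ρ₀) tends to +∞. -/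
open Filter

lemma abs_sin_nat_mul_le' (n : ℕ) (x : ℝ) :
    |Real.sin ((n : ℝ) * x)| ≤ (n : ℝ) * |Real.sin x| := by
  induction n with
  | zero => simp
  | succ m ih =>
    have : ((m : ℝ) + 1) * x = (m : ℝ) * x + x := by ring
    push_cast
    rw [this, Real.sin_add]
    have h1 : |Real.sin ((m : ℝ) * x) * Real.cos x| ≤ (m : ℝ) * |Real.sin x| := by
      rw [abs_mul]
      exact le_trans (mul_le_of_le_one_right (abs_nonneg _) (Real.abs_cos_le_one x)) ih
    have h2 : |Real.cos ((m : ℝ) * x) * Real.sin x| ≤ |Real.sin x| := by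
      rw [abs_mul]
      exact mul_le_of_le_one_left (abs_nonneg _) (Real.abs_cos_le_one _)
    have h3 := abs_add_le (Real.sin ((m : ℝ) * x) * Real.cos x)
      (Real.cos ((m : ℝ) * x) * Real.sin x)
    linarith

lemma d_formula (R₀ ρ₀ : ℝ) (hR : 0 < R₀) (hρ : 0 < ρ₀) (n : ℕ) (ω : ℝ) :
    deriv (fun ω => Real.sin ((n : ℝ) * ω) /
        (R₀ * Real.sqrt ((Real.sinh ρ₀) ^ 2 + (Real.sin ω) ^ 2))) ω /
      (R₀ * Real.sqrt ((Real.sinh ρ₀) ^ 2 + (Real.sin ω) ^ 2)) =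
    ((n : ℝ) * Real.cos ((n : ℝ) * ω) * ((Real.sinh ρ₀) ^ 2 + (Real.sin ω) ^ 2)
        - Real.sin ((n : ℝ) * ω) * Real.sin ω * Real.cos ω) /
      (R₀ ^ 2 * ((Real.sinh ρ₀) ^ 2 + (Real.sin ω) ^ 2) ^ 2) := by
  have hs : 0 < Real.sinh ρ₀ := Real.sinh_pos_iff.2 hρ
  set q : ℝ := (Real.sinh ρ₀) ^ 2 + (Real.sin ω) ^ 2 with hq
  have hqpos : 0 < q := by positivity
  set r : ℝ := Real.sqrt q with hr
  have hrpos : 0 < r := Real.sqrt_pos.2 hqpos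
  have hr2 : r ^ 2 = q := Real.sq_sqrt hqpos.le
  -- derivative of the inner function
  have hg : HasDerivAt (fun ω : ℝ => (Real.sinh ρ₀) ^ 2 + (Real.sin ω) ^ 2)
      (2 * Real.sin ω * Real.cos ω) ω := by
    have := ((Real.hasDerivAt_sin ω).pow 2).const_add ((Real.sinh ρ₀) ^ 2)
    exact this.congr_deriv (by norm_num)
  have hsqrt : HasDerivAt (fun ω : ℝ => Real.sqrt ((Real.sinh ρ₀) ^ 2 + (Real.sin ω) ^ 2))
      (2 * Real.sin ω * Real.cos ω / (2 * r)) ω :=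
    (Real.hasDerivAt_sqrt hqpos.ne').comp ω hg |>.congr_deriv (by rw [← hr]; ring)
  have hΞ : HasDerivAt (fun ω : ℝ => R₀ * Real.sqrt ((Real.sinh ρ₀) ^ 2 + (Real.sin ω) ^ 2))
      (R₀ * (2 * Real.sin ω * Real.cos ω / (2 * r))) ω := hsqrt.const_mul R₀
  have hnum : HasDerivAt (fun ω : ℝ => Real.sin ((n : ℝ) * ω))
      ((n : ℝ) * Real.cos ((n : ℝ) * ω)) ω := by
    have := (Real.hasDerivAt_sin ((n : ℝ) * ω)).comp ω ((hasDerivAt_id ω).const_mul (n : ℝ))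
    exact this.congr_deriv (by ring)
  have hΞne : R₀ * r ≠ 0 := by positivity
  have hdiv := hnum.div hΞ hΞne
  rw [show deriv (fun ω => Real.sin ((n : ℝ) * ω) / (R₀ * Real.sqrt ((Real.sinh ρ₀) ^ 2 + (Real.sin ω) ^ 2))) ω = _ from hdiv.deriv]
  rw [show Real.sqrt ((Real.sinh ρ₀) ^ 2 + (Real.sin ω) ^ 2) = r from rfl, ← hr2]
  have hrne : r ≠ 0 := hrpos.ne'
  field_simp

/-- For every integer n ≥ 1, the conormal derivative
dφ_{2,n}(ω) = (d/dω)(sin(nω)/Ξ(ω))/Ξ(ω) of the Neumann–Poincaré eigenfunction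
φ_{2,n}(ω) = sin(nω)/Ξ(ω) attains its maximum absolute value over [0, 2π) at
ω = 0 and ω = π, with |dφ_{2,n}(0)| = |dφ_{2,n}(π)| = n/(R₀² sinh² ρ₀), and for
fixed R₀ and n this maximum value tends to +∞ as ρ₀ → 0⁺. -/
theorem conormal_derivative_max_blowup (R₀ ρ₀ : ℝ) (hR : 0 < R₀) (hρ : 0 < ρ₀)
    (n : ℕ) (hn : 1 ≤ n)
    (Ξ φ d : ℝ → ℝ)
    (hΞ : Ξ = fun ω => R₀ * Real.sqrt ((Real.sinh ρ₀) ^ 2 + (Real.sin ω) ^ 2))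
    (hφ : φ = fun ω => Real.sin ((n : ℝ) * ω) / Ξ ω)
    (hd : d = fun ω => deriv φ ω / Ξ ω) :
    (∀ ω ∈ Set.Ico (0 : ℝ) (2 * Real.pi),
        |d ω| ≤ (n : ℝ) / (R₀ ^ 2 * (Real.sinh ρ₀) ^ 2)) ∧
    |d 0| = (n : ℝ) / (R₀ ^ 2 * (Real.sinh ρ₀) ^ 2) ∧
    |d Real.pi| = (n : ℝ) / (R₀ ^ 2 * (Real.sinh ρ₀) ^ 2) ∧
    Tendsto (fun r : ℝ => (n : ℝ) / (R₀ ^ 2 * (Real.sinh r) ^ 2))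
      (nhdsWithin 0 (Set.Ioi 0)) atTop := by
  have hs : 0 < Real.sinh ρ₀ := Real.sinh_pos_iff.2 hρ
  subst hΞ hφ hd
  have key : ∀ ω : ℝ, (fun ω => deriv (fun ω => Real.sin ((n : ℝ) * ω) /
        (R₀ * Real.sqrt ((Real.sinh ρ₀) ^ 2 + (Real.sin ω) ^ 2))) ω /
      (R₀ * Real.sqrt ((Real.sinh ρ₀) ^ 2 + (Real.sin ω) ^ 2))) ω =
    ((n : ℝ) * Real.cos ((n : ℝ) * ω) * ((Real.sinh ρ₀) ^ 2 + (Real.sin ω) ^ 2)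
        - Real.sin ((n : ℝ) * ω) * Real.sin ω * Real.cos ω) /
      (R₀ ^ 2 * ((Real.sinh ρ₀) ^ 2 + (Real.sin ω) ^ 2) ^ 2) :=
    fun ω => d_formula R₀ ρ₀ hR hρ n ω
  refine ⟨?_, ?_, ?_, ?_⟩
  · intro ω _
    rw [key ω]
    set s := Real.sinh ρ₀
    set t := Real.sin ω
    set q : ℝ := s ^ 2 + t ^ 2 with hq
    have hqpos : 0 < q := by positivity
    rw [abs_div, abs_of_pos (by positivity : (0:ℝ) < R₀ ^ 2 * q ^ 2),
      div_le_div_iff₀ (by positivity) (by positivity)]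
    have h1 : |(n : ℝ) * Real.cos ((n : ℝ) * ω) * q - Real.sin ((n : ℝ) * ω) * t * Real.cos ω|
        ≤ (n : ℝ) * q + (n : ℝ) * t ^ 2 := by
      calc _ ≤ |(n : ℝ) * Real.cos ((n : ℝ) * ω) * q| + |Real.sin ((n : ℝ) * ω) * t * Real.cos ω| :=
            abs_sub _ _
        _ ≤ (n : ℝ) * q + (n : ℝ) * t ^ 2 := by
            gcongr
            · rw [abs_mul, abs_mul]
              calc |(n:ℝ)| * |Real.cos ((n : ℝ) * ω)| * |q| ≤ (n:ℝ) * 1 * q := by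
                    rw [abs_of_nonneg (by positivity : (0:ℝ) ≤ (n:ℝ)),
                      abs_of_pos hqpos]
                    gcongr
                    exact Real.abs_cos_le_one _
                _ = (n : ℝ) * q := by ring
            · rw [abs_mul, abs_mul]
              calc |Real.sin ((n : ℝ) * ω)| * |t| * |Real.cos ω|
                  ≤ ((n : ℝ) * |t|) * |t| * 1 := by
                    gcongr
                    · exact abs_sin_nat_mul_le' n ω
                    · exact Real.abs_cos_le_one _
                _ = (n : ℝ) * t ^ 2 := by rw [← sq_abs]; ring
    calc |(n : ℝ) * Real.cos ((n : ℝ) * ω) * q - Real.sin ((n : ℝ) * ω) * t * Real.cos ω|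
          * (R₀ ^ 2 * s ^ 2)
        ≤ ((n : ℝ) * q + (n : ℝ) * t ^ 2) * (R₀ ^ 2 * s ^ 2) := by
          have : (0:ℝ) ≤ R₀ ^ 2 * s ^ 2 := by positivity
          exact mul_le_mul_of_nonneg_right h1 this
      _ ≤ (n : ℝ) * (R₀ ^ 2 * q ^ 2) := by
          have hn0 : (0:ℝ) ≤ (n : ℝ) := by positivity
          rw [hq]
          nlinarith [mul_nonneg (mul_nonneg hn0 (sq_nonneg R₀)) (sq_nonneg (t^2))]
  · rw [key 0]
    rw [show ((n:ℝ) * Real.cos ((n:ℝ)*0) * ((Real.sinh ρ₀)^2 + (Real.sin 0)^2)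
        - Real.sin ((n:ℝ)*0) * Real.sin 0 * Real.cos 0) = (n:ℝ) * (Real.sinh ρ₀)^2 by simp]
    rw [show (Real.sinh ρ₀)^2 + (Real.sin 0)^2 = (Real.sinh ρ₀)^2 by simp]
    rw [abs_of_nonneg (by positivity)]
    rw [div_eq_div_iff (by positivity) (by positivity)]
    ring
  · have h1 : Real.sin ((n : ℝ) * Real.pi) = 0 := Real.sin_nat_mul_pi n
    have h2 : |Real.cos ((n : ℝ) * Real.pi)| = 1 := by
      have := Real.abs_cos_int_mul_pi (n : ℤ)
      push_cast at this
      exact this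
    rw [key Real.pi, Real.sin_pi, h1]
    rw [show ((n:ℝ) * Real.cos ((n:ℝ)*Real.pi) * ((Real.sinh ρ₀)^2 + (0:ℝ)^2)
        - 0 * 0 * Real.cos Real.pi) = ((n:ℝ) * (Real.sinh ρ₀)^2) * Real.cos ((n:ℝ)*Real.pi) by
      ring]
    rw [abs_div, abs_mul, h2, mul_one,
      abs_of_nonneg (show (0:ℝ) ≤ (n:ℝ) * (Real.sinh ρ₀)^2 by positivity),
      abs_of_pos (show (0:ℝ) < R₀^2 * ((Real.sinh ρ₀)^2 + (0:ℝ)^2)^2 by positivity),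
      div_eq_div_iff (by positivity) (by positivity)]
    ring
  · have hnpos : (0:ℝ) < (n : ℝ) := by
      exact_mod_cast Nat.lt_of_lt_of_le Nat.zero_lt_one hn
    have h0 : Tendsto (fun r : ℝ => R₀ ^ 2 * (Real.sinh r) ^ 2)
        (nhdsWithin 0 (Set.Ioi 0)) (nhdsWithin 0 (Set.Ioi 0)) := by
      apply tendsto_nhdsWithin_of_tendsto_nhds_of_eventually_within
      · have hc : Continuous fun r : ℝ => R₀ ^ 2 * Real.sinh r ^ 2 := by continuity
        have := hc.tendsto 0
        simp only [Real.sinh_zero] at this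
        simpa using this.mono_left nhdsWithin_le_nhds
      · filter_upwards [self_mem_nhdsWithin] with r hr
        have : 0 < Real.sinh r := Real.sinh_pos_iff.2 hr
        exact Set.mem_Ioi.2 (mul_pos (pow_pos hR 2) (pow_pos this 2))
    have hinv : Tendsto (fun r : ℝ => (R₀ ^ 2 * (Real.sinh r) ^ 2)⁻¹)
        (nhdsWithin 0 (Set.Ioi 0)) atTop := h0.inv_tendsto_nhdsGT_zero
    simp only [div_eq_mul_inv]
    exact Tendsto.const_mul_atTop hnpos hinv
end

section
/- For every integer n ≥ 1, the conormal derivative along the ellipse of the boundary restriction of the single-layer potential of φ_{2,n}, namely the function g(ω) = (d/dω)( −((e^{nρ₀} + e^{−nρ₀})/(2n e^{nρ₀})) sin(nω) ) / Ξ(ω) = −((e^{nρ₀} + e^{−nρ₀})/(2 e^{nρ₀})) · cos(nω)/Ξ(ω), attains its maximum absolute value over [0, 2π) exactly at ω = 0 and ω = π, the two high-curvature points of the ellipse, with maximum value ((e^{nρ₀} + e^{−nρ₀})/(2 e^{nρ₀})) · (1/(R₀ sinh ρ₀)). -/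
/-- For every integer n ≥ 1, the conormal derivative along the
ellipse of the boundary restriction of the single-layer potential of φ_{2,n},
g(ω) = (d/dω)(−((e^{nρ₀}+e^{−nρ₀})/(2n e^{nρ₀})) sin(nω))/Ξ(ω)
     = −((e^{nρ₀}+e^{−nρ₀})/(2 e^{nρ₀})) cos(nω)/Ξ(ω),
attains its maximum absolute value over [0, 2π) exactly at ω = 0 and ω = π,
with maximum value ((e^{nρ₀}+e^{−nρ₀})/(2 e^{nρ₀}))·(1/(R₀ sinh ρ₀)). -/
theorem conormal_singleLayer_max_at_high_curvature (R₀ ρ₀ : ℝ) (hR : 0 < R₀)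
    (hρ : 0 < ρ₀) (n : ℕ) (hn : 1 ≤ n)
    (Ξ g : ℝ → ℝ)
    (hΞ : Ξ = fun ω => R₀ * Real.sqrt ((Real.sinh ρ₀) ^ 2 + (Real.sin ω) ^ 2))
    (hg : g = fun ω =>
      deriv (fun ω' => -((Real.exp ((n : ℝ) * ρ₀) + Real.exp (-((n : ℝ) * ρ₀))) /
          (2 * (n : ℝ) * Real.exp ((n : ℝ) * ρ₀))) * Real.sin ((n : ℝ) * ω')) ω / Ξ ω) :
    (∀ ω : ℝ, g ω =
        -((Real.exp ((n : ℝ) * ρ₀) + Real.exp (-((n : ℝ) * ρ₀))) /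
            (2 * Real.exp ((n : ℝ) * ρ₀))) * Real.cos ((n : ℝ) * ω) / Ξ ω) ∧
    ∀ ω ∈ Set.Ico (0 : ℝ) (2 * Real.pi),
      |g ω| ≤ (Real.exp ((n : ℝ) * ρ₀) + Real.exp (-((n : ℝ) * ρ₀))) /
          (2 * Real.exp ((n : ℝ) * ρ₀)) * (1 / (R₀ * Real.sinh ρ₀)) ∧
      (|g ω| = (Real.exp ((n : ℝ) * ρ₀) + Real.exp (-((n : ℝ) * ρ₀))) /
          (2 * Real.exp ((n : ℝ) * ρ₀)) * (1 / (R₀ * Real.sinh ρ₀)) ↔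
        ω = 0 ∨ ω = Real.pi) := by
  have hn0 : (n : ℝ) ≠ 0 := by positivity
  set C : ℝ := (Real.exp ((n : ℝ) * ρ₀) + Real.exp (-((n : ℝ) * ρ₀))) /
      (2 * Real.exp ((n : ℝ) * ρ₀)) with hC
  have hCpos : 0 < C := by positivity
  have hs : 0 < Real.sinh ρ₀ := Real.sinh_pos_iff.mpr hρ
  have hRs : 0 < R₀ * Real.sinh ρ₀ := by positivity
  have hΞge : ∀ ω, R₀ * Real.sinh ρ₀ ≤ Ξ ω := by
    intro ω
    rw [hΞ]
    have h1 : Real.sinh ρ₀ ≤ Real.sqrt ((Real.sinh ρ₀)^2 + (Real.sin ω)^2) :=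
      (Real.le_sqrt' hs).mpr (by nlinarith [sq_nonneg (Real.sin ω)])
    exact mul_le_mul_of_nonneg_left h1 hR.le
  have hΞpos : ∀ ω, 0 < Ξ ω := fun ω => lt_of_lt_of_le hRs (hΞge ω)
  have hΞat : ∀ ω, Real.sin ω = 0 → Ξ ω = R₀ * Real.sinh ρ₀ := by
    intro ω h
    rw [hΞ]
    simp only [h]
    rw [show (0:ℝ)^2 = 0 by ring, add_zero, Real.sqrt_sq hs.le]
  have hgω : ∀ ω : ℝ, g ω = -C * Real.cos ((n : ℝ) * ω) / Ξ ω := by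
    intro ω
    have hd : HasDerivAt (fun ω' => -((Real.exp ((n : ℝ) * ρ₀) + Real.exp (-((n : ℝ) * ρ₀))) /
          (2 * (n : ℝ) * Real.exp ((n : ℝ) * ρ₀))) * Real.sin ((n : ℝ) * ω'))
        (-((Real.exp ((n : ℝ) * ρ₀) + Real.exp (-((n : ℝ) * ρ₀))) /
          (2 * (n : ℝ) * Real.exp ((n : ℝ) * ρ₀))) * (Real.cos ((n : ℝ) * ω) * (n : ℝ))) ω :=
      HasDerivAt.const_mul _
        ((Real.hasDerivAt_sin ((n : ℝ) * ω)).comp ω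
          (((hasDerivAt_id ω).const_mul ((n : ℝ))).congr_deriv (by ring)))
    rw [hg]
    simp only
    rw [hd.deriv, hC]
    have he : Real.exp ((n : ℝ) * ρ₀) ≠ 0 := Real.exp_ne_zero _
    rw [div_eq_div_iff (hΞpos ω).ne' (hΞpos ω).ne']
    field_simp
  refine ⟨hgω, fun ω hω => ?_⟩
  obtain ⟨hω0, hω2⟩ := hω
  have habs : |g ω| = C * |Real.cos ((n : ℝ) * ω)| / Ξ ω := by
    rw [hgω ω, abs_div, abs_of_pos (hΞpos ω), abs_mul, abs_neg, abs_of_pos hCpos]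
  have hcos1 : |Real.cos ((n : ℝ) * ω)| ≤ 1 := Real.abs_cos_le_one _
  have hle : |g ω| ≤ C * (1 / (R₀ * Real.sinh ρ₀)) := by
    rw [habs, show C * (1 / (R₀ * Real.sinh ρ₀)) = C * 1 / (R₀ * Real.sinh ρ₀) by ring]
    gcongr
    exact hΞge ω
  refine ⟨hle, ?_⟩
  constructor
  · intro heq
    -- cross-multiplied equality
    have hcross : |Real.cos ((n : ℝ) * ω)| * (R₀ * Real.sinh ρ₀) = Ξ ω := by
      rw [habs] at heq
      have h1 : C * |Real.cos ((n : ℝ) * ω)| * (R₀ * Real.sinh ρ₀) = C * Ξ ω := by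
        field_simp at heq
        rw [div_eq_iff (hΞpos ω).ne'] at heq
        linear_combination C * heq
      have := mul_left_cancel₀ hCpos.ne' (by linarith [h1] : C * (|Real.cos ((n : ℝ) * ω)| * (R₀ * Real.sinh ρ₀)) = C * Ξ ω)
      exact this
    have hc1 : |Real.cos ((n : ℝ) * ω)| = 1 := by
      have h2 := hΞge ω
      nlinarith
    have hΞe : Ξ ω = R₀ * Real.sinh ρ₀ := by rw [← hcross, hc1, one_mul]
    have hsin0 : Real.sin ω = 0 := by
      rw [hΞ] at hΞe
      simp only at hΞe
      have h1 : Real.sqrt ((Real.sinh ρ₀)^2 + (Real.sin ω)^2) = Real.sinh ρ₀ :=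
        mul_left_cancel₀ hR.ne' hΞe
      have h2 := Real.sq_sqrt (by positivity : (0:ℝ) ≤ (Real.sinh ρ₀)^2 + (Real.sin ω)^2)
      rw [h1] at h2
      nlinarith [sq_nonneg (Real.sin ω)]
    obtain ⟨k, hk⟩ := Real.sin_eq_zero_iff.mp hsin0
    have hπ := Real.pi_pos
    have hk0 : (0:ℤ) ≤ k := by
      by_contra h
      push_neg at h
      have : (k:ℝ) ≤ -1 := by exact_mod_cast Int.le_sub_one_of_lt h
      nlinarith
    have hk2 : k < 2 := by
      by_contra h
      push_neg at h
      have : (2:ℝ) ≤ (k:ℝ) := by exact_mod_cast h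
      nlinarith
    interval_cases k
    · left; simpa using hk.symm
    · right; simpa using hk.symm
  · rintro (rfl | rfl)
    · rw [habs, hΞat 0 Real.sin_zero, mul_zero, Real.cos_zero, abs_one, mul_one]
      ring
    · rw [habs, hΞat Real.pi Real.sin_pi]
      have : |Real.cos ((n : ℝ) * Real.pi)| = 1 := by
        rw [show ((n:ℝ) * Real.pi) = ((n:ℤ):ℝ) * Real.pi by push_cast; ring]
        exact Real.abs_cos_int_mul_pi n
      rw [this, mul_one]
      ring
end
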